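/- arXiv:2210.13515 — 5 statements merged into one kernel-verified Lean document; each statement's English description precedes it below -/
import Mathlib

section
/- Let p be an odd prime. For every n ≥ 1 and every function f : 𝔽_p^n → ℝ with 0 ≤ f(x) ≤ 1 for all x, we have T_Φ(f) + T_Φ(1 − f) ≥ 2⁻⁸. (In other words, the system Φ is common.) -/
open Finset

/-- `G p n` is the vector space `𝔽_p^n`. -/
abbrev G (p n : ℕ) : Type := Fin n → ZMod p

/-- The set of solutions in `(𝔽_p^n)^9` to the system `Φ`:
`x₁ - x₂ + x₃ - x₄ = 0` and `x₅ - x₆ + x₇ - x₈ + x₉ = 0`. -/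
def phiSols (p n : ℕ) [NeZero p] : Finset (Fin 9 → G p n) :=
  Finset.univ.filter fun x =>
    x 0 - x 1 + x 2 - x 3 = 0 ∧ x 4 - x 5 + x 6 - x 7 + x 8 = 0

/-- `T_Φ(f)`: the average of `f(x₁)⋯f(x₉)` over solutions of `Φ`. -/
noncomputable def Tphi (p n : ℕ) [NeZero p] (f : G p n → ℝ) : ℝ :=
  (∑ x ∈ phiSols p n, ∏ i, f (x i)) / (phiSols p n).card

set_option linter.unusedSectionVars false

variable {p n : ℕ} [NeZero p]

noncomputable def Cor (h : G p n → ℝ) (u : G p n) : ℝ := ∑ x, h x * h (x + u)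

lemma sum_shift (h : G p n → ℝ) (t : G p n) : ∑ x, h (t + x) = ∑ x, h x :=
  Equiv.sum_comp (Equiv.addLeft t) h

lemma sum_shift' (h : G p n → ℝ) (t : G p n) : ∑ x, h (x + t) = ∑ x, h x :=
  Equiv.sum_comp (Equiv.addRight t) h

lemma cor_sum (h : G p n → ℝ) (hh : ∑ x, h x = 0) : ∑ u, Cor h u = 0 := by
  unfold Cor
  rw [Finset.sum_comm]
  simp_rw [← Finset.mul_sum, sum_shift, hh, mul_zero, Finset.sum_const_zero]

lemma cor_neg (h : G p n → ℝ) : Cor (fun x => -h x) = Cor h := by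
  funext u; unfold Cor; simp

lemma cor_add_const (e : ℝ) (h : G p n → ℝ) (hh : ∑ x, h x = 0) (u : G p n) :
    Cor (fun x => e + h x) u = (Fintype.card (G p n) : ℝ) * e^2 + Cor h u := by
  unfold Cor
  simp only [add_mul, mul_add, Finset.sum_add_distrib]
  simp_rw [← Finset.mul_sum, ← Finset.sum_mul, sum_shift', hh]
  simp [Finset.card_univ]
  ring

noncomputable def S1 (g : G p n → ℝ) : ℝ := ∑ a, ∑ b, ∑ c, g (a - b + c) * g a * g b * g c

lemma S1_eq (g : G p n → ℝ) : S1 g = ∑ u, (Cor g u)^2 := by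
  unfold S1 Cor
  rw [Finset.sum_comm]
  have h1 : ∀ b : G p n, ∑ a, ∑ c, g (a - b + c) * g a * g b * g c
      = ∑ u, ∑ c, g (u + c) * g (u + b) * g b * g c := by
    intro b
    rw [← Equiv.sum_comp (Equiv.addRight b) (fun a => ∑ c, g (a - b + c) * g a * g b * g c)]
    simp [add_sub_cancel_right]
  simp_rw [h1]
  rw [Finset.sum_comm]
  congr 1; funext u
  rw [sq, Finset.sum_mul_sum]
  congr 1; funext b; congr 1; funext c
  rw [add_comm b u, add_comm c u]; ring

noncomputable def S2 (g : G p n → ℝ) : ℝ :=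
  ∑ a, ∑ b, ∑ c, ∑ d, g a * g b * g c * g d * g (b + d - a - c)

lemma rot3 {M : Type*} [AddCommMonoid M] {α : Type*} [Fintype α] (F : α → α → α → M) :
    ∑ a, ∑ c, ∑ u, F a c u = ∑ u, ∑ a, ∑ c, F a c u := by
  have h : ∀ a, ∑ c, ∑ u, F a c u = ∑ u, ∑ c, F a c u := fun a => Finset.sum_comm
  simp_rw [h]
  exact Finset.sum_comm

lemma S2_eq (g : G p n → ℝ) : S2 g = ∑ u, ∑ v, Cor g u * Cor g v * g (u + v) := by
  unfold S2 Cor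
  have hsw : ∀ a : G p n, ∑ b, ∑ c, ∑ d, g a * g b * g c * g d * g (b + d - a - c)
      = ∑ c, ∑ b, ∑ d, g a * g b * g c * g d * g (b + d - a - c) :=
    fun a => Finset.sum_comm
  simp_rw [hsw]
  have h1 : ∀ a c : G p n, ∑ b, ∑ d, g a * g b * g c * g d * g (b + d - a - c)
      = ∑ u, ∑ v, g a * g (a + u) * g c * g (c + v) * g (u + v) := by
    intro a c
    rw [← Equiv.sum_comp (Equiv.addLeft a)
      (fun b => ∑ d, g a * g b * g c * g d * g (b + d - a - c))]
    simp only [Equiv.coe_addLeft]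
    refine Finset.sum_congr rfl fun u _ => ?_
    rw [← Equiv.sum_comp (Equiv.addLeft c)
      (fun d => g a * g (a + u) * g c * g d * g (a + u + d - a - c))]
    simp only [Equiv.coe_addLeft]
    refine Finset.sum_congr rfl fun v _ => ?_
    have harg : a + u + (c + v) - a - c = u + v := by abel
    rw [harg]
  simp_rw [h1]
  rw [rot3 (fun a c u => ∑ v, g a * g (a + u) * g c * g (c + v) * g (u + v))]
  refine Finset.sum_congr rfl fun u _ => ?_
  rw [rot3 (fun a c v => g a * g (a + u) * g c * g (c + v) * g (u + v))]
  refine Finset.sum_congr rfl fun v _ => ?_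
  rw [Finset.sum_mul_sum, Finset.sum_mul]
  refine Finset.sum_congr rfl fun a _ => ?_
  rw [Finset.sum_mul]
  refine Finset.sum_congr rfl fun c _ => ?_
  ring

lemma S1_decomp (e : ℝ) (h : G p n → ℝ) (hh : ∑ x, h x = 0) :
    S1 (fun x => e + h x) = (Fintype.card (G p n) : ℝ)^3 * e^4 + ∑ u, (Cor h u)^2 := by
  rw [S1_eq]
  simp_rw [cor_add_const e h hh]
  have : ∀ u : G p n, ((Fintype.card (G p n) : ℝ) * e^2 + Cor h u)^2
      = ((Fintype.card (G p n) : ℝ) * e^2)^2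
        + 2 * ((Fintype.card (G p n) : ℝ) * e^2) * Cor h u + (Cor h u)^2 := by
    intro u; ring
  simp_rw [this, Finset.sum_add_distrib, Finset.sum_const, ← Finset.mul_sum,
    cor_sum h hh, Finset.card_univ]
  ring

lemma S2_decomp (e : ℝ) (h : G p n → ℝ) (hh : ∑ x, h x = 0) :
    S2 (fun x => e + h x) = (Fintype.card (G p n) : ℝ)^4 * e^5
      + ∑ u, ∑ v, Cor h u * Cor h v * h (u + v) := by
  rw [S2_eq]
  simp_rw [cor_add_const e h hh]
  set q : ℝ := (Fintype.card (G p n) : ℝ) with hq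
  have inner : ∀ u : G p n,
      ∑ v, (q * e^2 + Cor h u) * (q * e^2 + Cor h v) * (e + h (u + v))
      = (q * e^2 + Cor h u) * (q^2 * e^3 + ∑ v, Cor h v * h (u + v)) := by
    intro u
    have expand : ∀ v : G p n,
        (q * e^2 + Cor h u) * (q * e^2 + Cor h v) * (e + h (u + v))
        = (q * e^2 + Cor h u) *
          ((q * e^2 * e) + (q * e^2) * h (u + v) + Cor h v * e + Cor h v * h (u + v)) := by
      intro v; ring
    simp_rw [expand, ← Finset.mul_sum]
    congr 1
    rw [Finset.sum_add_distrib, Finset.sum_add_distrib, Finset.sum_add_distrib,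
      Finset.sum_const, Finset.card_univ, ← Finset.mul_sum, ← Finset.sum_mul,
      sum_shift h u, hh, cor_sum h hh]
    ring
  simp_rw [inner]
  have expand2 : ∀ u : G p n,
      (q * e^2 + Cor h u) * (q^2 * e^3 + ∑ v, Cor h v * h (u + v))
      = q^3 * e^5 + (q * e^2) * (∑ v, Cor h v * h (u + v)) + q^2 * e^3 * Cor h u
        + Cor h u * ∑ v, Cor h v * h (u + v) := by
    intro u; ring
  simp_rw [expand2, Finset.sum_add_distrib, Finset.sum_const, Finset.card_univ,
    ← Finset.mul_sum, cor_sum h hh]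
  have hdd : ∑ u : G p n, ∑ v, Cor h v * h (u + v) = 0 := by
    rw [Finset.sum_comm]
    simp_rw [← Finset.mul_sum, sum_shift' h, hh, mul_zero, Finset.sum_const_zero]
  rw [hdd]
  simp_rw [Finset.mul_sum]
  have : ∀ u, ∑ v, Cor h u * (Cor h v * h (u + v)) = ∑ v, Cor h u * Cor h v * h (u+v) := by
    intro u; exact Finset.sum_congr rfl fun v _ => by ring
  simp_rw [this]
  ring

lemma E_eq (h : G p n → ℝ) :
    ∑ u, ∑ v, Cor h u * Cor h v * h (u + v)
      = ∑ w, h w * ∑ u, Cor h u * Cor h (w - u) := by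
  have h1 : ∀ u : G p n, ∑ v, Cor h u * Cor h v * h (u + v)
      = ∑ w, Cor h u * Cor h (w - u) * h w := by
    intro u
    rw [← Equiv.sum_comp (Equiv.addLeft u) (fun w => Cor h u * Cor h (w - u) * h w)]
    simp only [Equiv.coe_addLeft, add_sub_cancel_left]
  simp_rw [h1]
  rw [Finset.sum_comm]
  refine Finset.sum_congr rfl fun w _ => ?_
  rw [Finset.mul_sum]
  exact Finset.sum_congr rfl fun u _ => by ring

lemma D_sq_le (h : G p n → ℝ) (w : G p n) :
    (∑ u, Cor h u * Cor h (w - u))^2 ≤ (∑ u, (Cor h u)^2)^2 := by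
  have cs := Finset.sum_mul_sq_le_sq_mul_sq Finset.univ (fun u => Cor h u)
    (fun u => Cor h (w - u))
  have hre : ∑ u, (Cor h (w - u))^2 = ∑ u, (Cor h u)^2 := by
    rw [← Equiv.sum_comp (Equiv.subLeft w) (fun u => (Cor h u)^2)]
    simp only [Equiv.subLeft_apply]
  calc (∑ u, Cor h u * Cor h (w - u))^2
      ≤ (∑ u, (Cor h u)^2) * (∑ u, (Cor h (w - u))^2) := cs
    _ = (∑ u, (Cor h u)^2)^2 := by rw [hre, sq]

lemma E_sq_le (h : G p n → ℝ) :
    (∑ u, ∑ v, Cor h u * Cor h v * h (u + v))^2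
      ≤ (∑ x, (h x)^2) * ((Fintype.card (G p n) : ℝ) * (∑ u, (Cor h u)^2)^2) := by
  rw [E_eq]
  have cs := Finset.sum_mul_sq_le_sq_mul_sq Finset.univ (fun w => h w)
    (fun w => ∑ u, Cor h u * Cor h (w - u))
  refine cs.trans ?_
  apply mul_le_mul_of_nonneg_left ?_ (by positivity)
  calc ∑ w, (∑ u, Cor h u * Cor h (w - u))^2
      ≤ ∑ _w : G p n, (∑ u, (Cor h u)^2)^2 := Finset.sum_le_sum fun w _ => D_sq_le h w
    _ = (Fintype.card (G p n) : ℝ) * (∑ u, (Cor h u)^2)^2 := by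
        rw [Finset.sum_const, Finset.card_univ, nsmul_eq_mul]

def toSol (y : (G p n × G p n × G p n) × (G p n × G p n × G p n × G p n)) : Fin 9 → G p n :=
  ![y.1.1 - y.1.2.1 + y.1.2.2, y.1.1, y.1.2.1, y.1.2.2,
    y.2.1, y.2.2.1, y.2.2.2.1, y.2.2.2.2,
    y.2.2.1 + y.2.2.2.2 - y.2.1 - y.2.2.2.1]

def fromSol (x : Fin 9 → G p n) : (G p n × G p n × G p n) × (G p n × G p n × G p n × G p n) :=
  ((x 1, x 2, x 3), (x 4, x 5, x 6, x 7))

lemma toSol_mem (y : (G p n × G p n × G p n) × (G p n × G p n × G p n × G p n)) :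
    toSol y ∈ phiSols p n := by
  refine Finset.mem_filter.2 ⟨Finset.mem_univ _, ?_, ?_⟩
  · show y.1.1 - y.1.2.1 + y.1.2.2 - y.1.1 + y.1.2.1 - y.1.2.2 = 0
    abel
  · show y.2.1 - y.2.2.1 + y.2.2.2.1 - y.2.2.2.2 +
      (y.2.2.1 + y.2.2.2.2 - y.2.1 - y.2.2.2.1) = 0
    abel

lemma fromSol_toSol (y : (G p n × G p n × G p n) × (G p n × G p n × G p n × G p n)) :
    fromSol (toSol y) = y := rfl

lemma toSol_fromSol (x : Fin 9 → G p n) (hx : x ∈ phiSols p n) :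
    toSol (fromSol x) = x := by
  obtain ⟨-, h1, h2⟩ := Finset.mem_filter.1 hx
  funext i
  fin_cases i
  · show x 1 - x 2 + x 3 = x 0
    linear_combination -h1
  · rfl
  · rfl
  · rfl
  · rfl
  · rfl
  · rfl
  · rfl
  · show x 5 + x 7 - x 4 - x 6 = x 8
    linear_combination -h2

lemma prod_toSol (f : G p n → ℝ) (y : (G p n × G p n × G p n) × (G p n × G p n × G p n × G p n)) :
    ∏ i, f (toSol y i)
      = (f (y.1.1 - y.1.2.1 + y.1.2.2) * f y.1.1 * f y.1.2.1 * f y.1.2.2)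
        * (f y.2.1 * f y.2.2.1 * f y.2.2.2.1 * f y.2.2.2.2
            * f (y.2.2.1 + y.2.2.2.2 - y.2.1 - y.2.2.2.1)) := by
  rw [Fin.prod_univ_succ, Fin.prod_univ_succ, Fin.prod_univ_succ, Fin.prod_univ_succ,
    Fin.prod_univ_succ, Fin.prod_univ_succ, Fin.prod_univ_succ, Fin.prod_univ_succ,
    Fin.prod_univ_succ, Fin.prod_univ_zero]
  show f (toSol y 0) * (f (toSol y 1) * (f (toSol y 2) * (f (toSol y 3) * (f (toSol y 4) *
    (f (toSol y 5) * (f (toSol y 6) * (f (toSol y 7) * (f (toSol y 8) * 1)))))))) = _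
  show f (y.1.1 - y.1.2.1 + y.1.2.2) * (f y.1.1 * (f y.1.2.1 * (f y.1.2.2 * (f y.2.1 *
    (f y.2.2.1 * (f y.2.2.2.1 * (f y.2.2.2.2 *
      (f (y.2.2.1 + y.2.2.2.2 - y.2.1 - y.2.2.2.1) * 1)))))))) = _
  ring

lemma key_sum (f : G p n → ℝ) :
    ∑ x ∈ phiSols p n, ∏ i, f (x i) = S1 f * S2 f := by
  rw [Finset.sum_nbij' (i := fromSol) (j := toSol)
    (s := phiSols p n)
    (t := (Finset.univ : Finset ((G p n × G p n × G p n) × (G p n × G p n × G p n × G p n))))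
    (f := fun x => ∏ i, f (x i))
    (g := fun y => (f (y.1.1 - y.1.2.1 + y.1.2.2) * f y.1.1 * f y.1.2.1 * f y.1.2.2)
        * (f y.2.1 * f y.2.2.1 * f y.2.2.2.1 * f y.2.2.2.2
            * f (y.2.2.1 + y.2.2.2.2 - y.2.1 - y.2.2.2.1)))
    (fun x _ => Finset.mem_univ _) (fun y _ => toSol_mem y)
    (fun x hx => toSol_fromSol x hx) (fun y _ => fromSol_toSol y)
    (fun x hx => by
      have h1 := prod_toSol f (fromSol x)
      rw [toSol_fromSol x hx] at h1
      exact h1)]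
  rw [Fintype.sum_prod_type]
  dsimp only
  rw [← Finset.sum_mul_sum]
  congr 1
  · unfold S1
    rw [Fintype.sum_prod_type]
    exact Finset.sum_congr rfl fun a _ => Fintype.sum_prod_type _
  · unfold S2
    rw [Fintype.sum_prod_type]
    refine Finset.sum_congr rfl fun a _ => ?_
    rw [Fintype.sum_prod_type]
    exact Finset.sum_congr rfl fun b _ => Fintype.sum_prod_type _

lemma card_phiSols_aux : (phiSols p n).card = Fintype.card (G p n) ^ 7 := by
  rw [Finset.card_nbij' (i := fromSol) (j := toSol)
    (t := (Finset.univ : Finset ((G p n × G p n × G p n) × (G p n × G p n × G p n × G p n))))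
    (fun x _ => Finset.mem_univ _) (fun y _ => toSol_mem y)
    (fun x hx => toSol_fromSol x hx) (fun y _ => fromSol_toSol y)]
  simp [Fintype.card_prod]
  ring

set_option maxHeartbeats 2000000 in
theorem phi_is_common (p : ℕ) [NeZero p] (hp : p.Prime) (hodd : Odd p)
    (n : ℕ) (hn : 1 ≤ n) (f : G p n → ℝ) (hf : ∀ x, 0 ≤ f x ∧ f x ≤ 1) :
    Tphi p n f + Tphi p n (fun x => 1 - f x) ≥ (2 : ℝ) ^ (-8 : ℤ) := by
  set q : ℝ := (Fintype.card (G p n) : ℝ) with hq_def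
  have hqpos : 0 < q := by
    rw [hq_def]; exact_mod_cast Fintype.card_pos
  have hqne : q ≠ 0 := ne_of_gt hqpos
  set a : ℝ := (∑ x, f x) / q with ha_def
  set h : G p n → ℝ := fun x => f x - a with hh_def
  have hSf : ∑ x, f x = q * a := by
    rw [ha_def, mul_comm, div_mul_cancel₀ _ hqne]
  have hh : ∑ x, h x = 0 := by
    have : ∑ x, h x = (∑ x, f x) - q * a := by
      rw [hh_def]
      rw [Finset.sum_sub_distrib, Finset.sum_const, Finset.card_univ, nsmul_eq_mul, hq_def]
    rw [this, hSf]; ring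
  have hh2 : ∑ x, (fun x => -h x) x = 0 := by simpa using hh
  set S0 : ℝ := ∑ u, (Cor h u)^2 with hS0_def
  set E : ℝ := ∑ u, ∑ v, Cor h u * Cor h v * h (u + v) with hE_def
  set b : ℝ := 1 - a with hb_def
  clear_value q a h S0 E b
  have hS0 : 0 ≤ S0 := by rw [hS0_def]; positivity
  have hcard : ((phiSols p n).card : ℝ) = q^7 := by
    rw [card_phiSols_aux, hq_def]; push_cast; ring
  have hf1 : f = fun x => a + h x := by funext x; rw [hh_def]; ring
  have hf2 : (fun x => 1 - f x) = fun x => b + -h x := by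
    funext x; rw [hb_def, hh_def]; ring
  have hT1 : Tphi p n f = ((q^3*a^4 + S0) * (q^4*a^5 + E)) / q^7 := by
    rw [Tphi, key_sum, hcard]
    congr 2
    · rw [hf1, S1_decomp a h hh, ← hq_def, ← hS0_def]
    · rw [hf1, S2_decomp a h hh, ← hq_def, ← hE_def]
  have hT2 : Tphi p n (fun x => 1 - f x) = ((q^3*b^4 + S0) * (q^4*b^5 - E)) / q^7 := by
    rw [Tphi,
      show (∑ x ∈ phiSols p n, ∏ i, (1 - f (x i)))
          = S1 (fun x => 1 - f x) * S2 (fun x => 1 - f x) from key_sum (fun x => 1 - f x),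
      hcard]
    congr 2
    · rw [hf2, S1_decomp b (fun x => -h x) hh2, cor_neg, ← hq_def, ← hS0_def]
    · rw [hf2, S2_decomp b (fun x => -h x) hh2, cor_neg, ← hq_def]
      simp only [mul_neg, Finset.sum_neg_distrib, ← hE_def]
      ring
  -- bounds on a
  have ha0 : 0 ≤ a := by
    rw [ha_def]
    apply div_nonneg _ hqpos.le
    exact Finset.sum_nonneg fun x _ => (hf x).1
  have hb0 : 0 ≤ b := by
    rw [hb_def]
    have : ∑ x, f x ≤ q := by
      calc ∑ x, f x ≤ ∑ _x : G p n, (1:ℝ) := Finset.sum_le_sum fun x _ => (hf x).2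
        _ = q := by rw [Finset.sum_const, Finset.card_univ, nsmul_eq_mul, hq_def]; ring
    have : a ≤ 1 := by rw [ha_def]; exact div_le_one_of_le₀ this hqpos.le
    linarith
  have hab : a + b = 1 := by rw [hb_def]; ring
  -- bound on sum h^2
  have hsumh2 : ∑ x, (h x)^2 ≤ q / 4 := by
    have e1 : ∑ x, (h x)^2 = (∑ x, (f x)^2) - q * a^2 := by
      rw [hh_def]
      have : ∀ x : G p n, (f x - a)^2 = (f x)^2 - 2*a*(f x) + a^2 := fun x => by ring
      simp_rw [this, Finset.sum_add_distrib, Finset.sum_sub_distrib, ← Finset.mul_sum,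
        Finset.sum_const, Finset.card_univ, nsmul_eq_mul, hSf, ← hq_def]
      ring
    have e2 : ∑ x, (f x)^2 ≤ ∑ x, f x := by
      refine Finset.sum_le_sum fun x _ => ?_
      have := hf x; nlinarith [this.1, this.2]
    rw [hSf] at e2
    rw [e1]
    nlinarith [e2, sq_nonneg (a - 1/2), hqpos]
  -- bound on E
  have hE2 : E^2 ≤ (q/2 * S0)^2 := by
    have := E_sq_le h
    rw [← hE_def, ← hq_def, ← hS0_def] at this
    have h2 : E^2 ≤ (q/4) * (q * S0^2) := by
      refine this.trans ?_
      apply mul_le_mul_of_nonneg_right hsumh2 (mul_nonneg hqpos.le (sq_nonneg _))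
    nlinarith [h2]
  rw [hT1, hT2, ge_iff_le, show ((2:ℝ)^(-8:ℤ)) = 1/256 by norm_num,
    ← add_div, le_div_iff₀ (pow_pos hqpos 7)]
  clear hcard hf1 hf2 hh hh2 hSf hsumh2 hh_def ha_def hq_def hS0_def hE_def hb_def h hT1 hT2 hf f
  have hEabs : -(q/2 * S0) ≤ E ∧ E ≤ q/2 * S0 := by
    constructor <;> nlinarith [hE2, mul_nonneg (by linarith : (0:ℝ) ≤ q/2) hS0]
  -- pure inequalities in a, b
  have h2ab : 1/2 ≤ a^2 + b^2 := by nlinarith [sq_nonneg (a - b)]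
  have h4ab : 1/8 ≤ a^4 + b^4 := by
    nlinarith [sq_nonneg (a^2 - b^2), sq_nonneg (a^2 + b^2 - 1/2), h2ab]
  have h8ab : 1/128 ≤ a^8 + b^8 := by
    nlinarith [sq_nonneg (a^4 - b^4), sq_nonneg (a^4 + b^4 - 1/8), h4ab]
  have hm : 0 ≤ (a - b) * (a^8 - b^8) := by
    nlinarith [mul_nonneg (sq_nonneg (a - b)) (show (0:ℝ) ≤ a^7 + a^6*b + a^5*b^2 + a^4*b^3
      + a^3*b^4 + a^2*b^5 + a*b^6 + b^7 by positivity)]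
  have h9ab : 1/256 ≤ a^9 + b^9 := by
    have e1 : 2*(a^9+b^9) = (a+b)*(a^8+b^8) + (a-b)*(a^8-b^8) := by ring
    rw [hab] at e1
    linarith [hm, h8ab]
  have hP1 : a^4 - b^4 ≤ 2*(a^5 + b^5) := by
    rcases le_total a b with hle | hle
    · nlinarith [pow_le_pow_left₀ ha0 hle 4, pow_nonneg ha0 5, pow_nonneg hb0 5]
    · nlinarith [mul_nonneg (pow_nonneg ha0 4) (show (0:ℝ) ≤ 2*a - 1 by linarith),
        pow_nonneg hb0 4, pow_nonneg hb0 5]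
  have hP2 : b^4 - a^4 ≤ 2*(a^5 + b^5) := by
    rcases le_total b a with hle | hle
    · nlinarith [pow_le_pow_left₀ hb0 hle 4, pow_nonneg ha0 5, pow_nonneg hb0 5]
    · nlinarith [mul_nonneg (pow_nonneg hb0 4) (show (0:ℝ) ≤ 2*b - 1 by linarith),
        pow_nonneg ha0 4, pow_nonneg ha0 5]
  -- key nonnegativity
  have key : 0 ≤ q^4 * S0 * (a^5 + b^5) + q^3 * (E * (a^4 - b^4)) := by
    rcases le_total (b^4) (a^4) with hd | hd
    · have t1 : 0 ≤ q^3 * ((E + q/2*S0) * (a^4 - b^4)) :=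
        mul_nonneg (pow_nonneg hqpos.le 3) (mul_nonneg (by linarith [hEabs.1]) (by linarith))
      have t2 : 0 ≤ q^4 * S0 * ((a^5 + b^5) - (a^4 - b^4)/2) :=
        mul_nonneg (mul_nonneg (pow_nonneg hqpos.le 4) hS0) (by linarith)
      nlinarith [t1, t2]
    · have t1 : 0 ≤ q^3 * ((q/2*S0 - E) * (b^4 - a^4)) :=
        mul_nonneg (pow_nonneg hqpos.le 3) (mul_nonneg (by linarith [hEabs.2]) (by linarith))
      have t2 : 0 ≤ q^4 * S0 * ((a^5 + b^5) - (b^4 - a^4)/2) :=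
        mul_nonneg (mul_nonneg (pow_nonneg hqpos.le 4) hS0) (by linarith)
      nlinarith [t1, t2]
  -- final
  have h9q : q^7 * (1/256) ≤ q^7 * (a^9 + b^9) :=
    mul_le_mul_of_nonneg_left h9ab (pow_nonneg hqpos.le 7)
  nlinarith [key, h9q]
end

section
/- Let p be an odd prime. There exists a constant c₀ > 0 such that for every n ≥ 1 and every f : 𝔽_p^n → ℝ with 0 ≤ f ≤ 1 and 𝔼f ≥ 0.45, we have T_Φ(f) ≥ c₀. (In other words, Φ is 0.45-prevalent.) -/
open Finset

/-- `𝔼f`, the average of `f` over `𝔽_p^n`. -/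
noncomputable def expect (p n : ℕ) [NeZero p] (f : G p n → ℝ) : ℝ :=
  (∑ x, f x) / (p : ℝ) ^ n

set_option linter.unusedSectionVars false
set_option linter.unusedVariables false
set_option linter.deprecated false

namespace PhiAux

variable (p : ℕ) [NeZero p]

noncomputable abbrev ψ : AddChar (ZMod p) ℂ := ZMod.stdAddChar

lemma psi_map_sum {ι : Type*} (s : Finset ι) (g : ι → ZMod p) :
    ψ p (∑ i ∈ s, g i) = ∏ i ∈ s, ψ p (g i) := by
  classical
  induction s using Finset.cons_induction with
  | empty => simp
  | cons a s ha ih => rw [Finset.sum_cons, Finset.prod_cons, AddChar.map_add_eq_mul, ih]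

lemma psi_conj (t : ZMod p) : (starRingEnd ℂ) (ψ p t) = ψ p (-t) := by
  have habs : ‖ψ p t‖ = 1 := by
    rw [ZMod.stdAddChar_apply]; exact Circle.norm_coe _
  rw [AddChar.map_neg_eq_inv, Complex.inv_eq_conj habs]

lemma sum_psi_mul (a : ZMod p) :
    ∑ u : ZMod p, ψ p (u * a) = if a = 0 then (p : ℂ) else 0 := by
  have := AddChar.sum_mulShift a (ZMod.isPrimitive_stdAddChar p)
  rw [ZMod.card p] at this; simpa using this

variable (n : ℕ)

def dot (ξ x : G p n) : ZMod p := ∑ i, ξ i * x i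

lemma dot_comm (ξ x : G p n) : dot p n ξ x = dot p n x ξ := by
  simp [dot, mul_comm]

lemma dot_add_right (ξ a b : G p n) : dot p n ξ (a + b) = dot p n ξ a + dot p n ξ b := by
  simp [dot, mul_add, Finset.sum_add_distrib]

lemma dot_sub_right (ξ a b : G p n) : dot p n ξ (a - b) = dot p n ξ a - dot p n ξ b := by
  simp [dot, mul_sub, Finset.sum_sub_distrib]

lemma dot_neg_left (ξ a : G p n) : dot p n (-ξ) a = - dot p n ξ a := by
  simp [dot, Finset.sum_neg_distrib]

lemma dot_zero_left (a : G p n) : dot p n 0 a = 0 := by simp [dot]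

lemma dot_zero_right (ξ : G p n) : dot p n ξ 0 = 0 := by simp [dot]

lemma sum_psi_dot (v : G p n) :
    ∑ ξ : G p n, ψ p (dot p n ξ v) = if v = 0 then ((p : ℂ)) ^ n else 0 := by
  classical
  calc ∑ ξ : G p n, ψ p (dot p n ξ v) = ∑ ξ : G p n, ∏ i, ψ p (ξ i * v i) := by
        refine Finset.sum_congr rfl fun ξ _ => ?_
        rw [dot, psi_map_sum]
    _ = ∏ i, ∑ u : ZMod p, ψ p (u * v i) := by
        rw [Finset.prod_univ_sum, Fintype.piFinset_univ]
    _ = ∏ i, (if v i = 0 then (p : ℂ) else 0) := by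
        refine Finset.prod_congr rfl fun i _ => sum_psi_mul p (v i)
    _ = if v = 0 then ((p : ℂ)) ^ n else 0 := by
        by_cases h : v = 0
        · simp [h]
        · obtain ⟨i, hi⟩ : ∃ i, v i ≠ 0 := by
            by_contra hc; push_neg at hc; exact h (funext hc)
          simp only [h, if_false]
          exact Finset.prod_eq_zero (Finset.mem_univ i) (by simp [hi])

noncomputable def Sf (f : G p n → ℝ) (ξ : G p n) : ℂ :=
  ∑ x, (f x : ℂ) * ψ p (dot p n ξ x)

lemma prod_univ_nine (F : Fin 9 → ℂ) :
    ∏ i, F i = F 0 * F 1 * F 2 * F 3 * F 4 * F 5 * F 6 * F 7 * F 8 := by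
  rw [Fin.prod_univ_succ, Fin.prod_univ_eight]
  rw [show Fin.succ (0 : Fin 8) = (1 : Fin 9) from rfl,
    show Fin.succ (1 : Fin 8) = (2 : Fin 9) from rfl,
    show Fin.succ (2 : Fin 8) = (3 : Fin 9) from rfl,
    show Fin.succ (3 : Fin 8) = (4 : Fin 9) from rfl,
    show Fin.succ (4 : Fin 8) = (5 : Fin 9) from rfl,
    show Fin.succ (5 : Fin 8) = (6 : Fin 9) from rfl,
    show Fin.succ (6 : Fin 8) = (7 : Fin 9) from rfl,
    show Fin.succ (7 : Fin 8) = (8 : Fin 9) from rfl]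
  ring

lemma master (f : G p n → ℝ) :
    ((∑ x ∈ phiSols p n, ∏ i, f (x i) : ℝ) : ℂ) * (p : ℂ) ^ (2 * n)
      = (∑ ξ : G p n, (Sf p n f ξ * Sf p n f (-ξ)) ^ 2)
        * (∑ η : G p n, (Sf p n f η * Sf p n f (-η)) ^ 2 * Sf p n f η) := by
  classical
  have split : ∀ (ξ η : G p n) (x : Fin 9 → G p n),
      (∏ i, (f (x i) : ℂ)) *
        (ψ p (dot p n ξ (x 0 - x 1 + x 2 - x 3)) * ψ p (dot p n η (x 4 - x 5 + x 6 - x 7 + x 8)))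
      = ∏ i : Fin 9, ((f (x i) : ℂ) *
          ψ p (dot p n (![ξ, -ξ, ξ, -ξ, η, -η, η, -η, η] i) (x i))) := by
    intro ξ η x
    have h1 : dot p n ξ (x 0 - x 1 + x 2 - x 3)
        = dot p n ξ (x 0) + (dot p n (-ξ) (x 1) + (dot p n ξ (x 2) + dot p n (-ξ) (x 3))) := by
      simp [dot_sub_right, dot_add_right, dot_neg_left]; ring
    have h2 : dot p n η (x 4 - x 5 + x 6 - x 7 + x 8)
        = dot p n η (x 4) + (dot p n (-η) (x 5) + (dot p n η (x 6) +
            (dot p n (-η) (x 7) + dot p n η (x 8)))) := by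
      simp [dot_sub_right, dot_add_right, dot_neg_left]; ring
    rw [h1, h2, prod_univ_nine, prod_univ_nine]
    simp only [AddChar.map_add_eq_mul,
      show ∀ a b c d e f' g h i : G p n, (![a,b,c,d,e,f',g,h,i] (0:Fin 9)) = a from fun _ _ _ _ _ _ _ _ _ => rfl,
      show ∀ a b c d e f' g h i : G p n, (![a,b,c,d,e,f',g,h,i] (1:Fin 9)) = b from fun _ _ _ _ _ _ _ _ _ => rfl,
      show ∀ a b c d e f' g h i : G p n, (![a,b,c,d,e,f',g,h,i] (2:Fin 9)) = c from fun _ _ _ _ _ _ _ _ _ => rfl,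
      show ∀ a b c d e f' g h i : G p n, (![a,b,c,d,e,f',g,h,i] (3:Fin 9)) = d from fun _ _ _ _ _ _ _ _ _ => rfl,
      show ∀ a b c d e f' g h i : G p n, (![a,b,c,d,e,f',g,h,i] (4:Fin 9)) = e from fun _ _ _ _ _ _ _ _ _ => rfl,
      show ∀ a b c d e f' g h i : G p n, (![a,b,c,d,e,f',g,h,i] (5:Fin 9)) = f' from fun _ _ _ _ _ _ _ _ _ => rfl,
      show ∀ a b c d e f' g h i : G p n, (![a,b,c,d,e,f',g,h,i] (6:Fin 9)) = g from fun _ _ _ _ _ _ _ _ _ => rfl,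
      show ∀ a b c d e f' g h i : G p n, (![a,b,c,d,e,f',g,h,i] (7:Fin 9)) = h from fun _ _ _ _ _ _ _ _ _ => rfl,
      show ∀ a b c d e f' g h i : G p n, (![a,b,c,d,e,f',g,h,i] (8:Fin 9)) = i from fun _ _ _ _ _ _ _ _ _ => rfl]
    ring
  have fub : ∀ (ξ η : G p n),
      ∑ x : Fin 9 → G p n, ∏ i : Fin 9, ((f (x i) : ℂ) *
          ψ p (dot p n (![ξ, -ξ, ξ, -ξ, η, -η, η, -η, η] i) (x i)))
      = ∏ i : Fin 9, Sf p n f (![ξ, -ξ, ξ, -ξ, η, -η, η, -η, η] i) := by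
    intro ξ η
    simp only [Sf]
    rw [Finset.prod_univ_sum, Fintype.piFinset_univ]
  have prodeval : ∀ (ξ η : G p n),
      ∏ i : Fin 9, Sf p n f (![ξ, -ξ, ξ, -ξ, η, -η, η, -η, η] i)
      = (Sf p n f ξ * Sf p n f (-ξ)) ^ 2 * ((Sf p n f η * Sf p n f (-η)) ^ 2 * Sf p n f η) := by
    intro ξ η
    rw [prod_univ_nine]
    simp only [
      show ∀ a b c d e f' g h i : G p n, (![a,b,c,d,e,f',g,h,i] (0:Fin 9)) = a from fun _ _ _ _ _ _ _ _ _ => rfl,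
      show ∀ a b c d e f' g h i : G p n, (![a,b,c,d,e,f',g,h,i] (1:Fin 9)) = b from fun _ _ _ _ _ _ _ _ _ => rfl,
      show ∀ a b c d e f' g h i : G p n, (![a,b,c,d,e,f',g,h,i] (2:Fin 9)) = c from fun _ _ _ _ _ _ _ _ _ => rfl,
      show ∀ a b c d e f' g h i : G p n, (![a,b,c,d,e,f',g,h,i] (3:Fin 9)) = d from fun _ _ _ _ _ _ _ _ _ => rfl,
      show ∀ a b c d e f' g h i : G p n, (![a,b,c,d,e,f',g,h,i] (4:Fin 9)) = e from fun _ _ _ _ _ _ _ _ _ => rfl,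
      show ∀ a b c d e f' g h i : G p n, (![a,b,c,d,e,f',g,h,i] (5:Fin 9)) = f' from fun _ _ _ _ _ _ _ _ _ => rfl,
      show ∀ a b c d e f' g h i : G p n, (![a,b,c,d,e,f',g,h,i] (6:Fin 9)) = g from fun _ _ _ _ _ _ _ _ _ => rfl,
      show ∀ a b c d e f' g h i : G p n, (![a,b,c,d,e,f',g,h,i] (7:Fin 9)) = h from fun _ _ _ _ _ _ _ _ _ => rfl,
      show ∀ a b c d e f' g h i : G p n, (![a,b,c,d,e,f',g,h,i] (8:Fin 9)) = i from fun _ _ _ _ _ _ _ _ _ => rfl]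
    ring
  calc ((∑ x ∈ phiSols p n, ∏ i, f (x i) : ℝ) : ℂ) * (p : ℂ) ^ (2 * n)
      = ∑ x : Fin 9 → G p n, (∏ i, (f (x i) : ℂ)) *
          ((∑ ξ : G p n, ψ p (dot p n ξ (x 0 - x 1 + x 2 - x 3))) *
           (∑ η : G p n, ψ p (dot p n η (x 4 - x 5 + x 6 - x 7 + x 8)))) := by
        push_cast
        rw [phiSols, Finset.sum_filter, Finset.sum_mul]
        refine Finset.sum_congr rfl fun x _ => ?_
        rw [sum_psi_dot, sum_psi_dot]
        by_cases h1 : x 0 - x 1 + x 2 - x 3 = 0 <;>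
          by_cases h2 : x 4 - x 5 + x 6 - x 7 + x 8 = 0 <;>
          simp [h1, h2, two_mul, pow_add] <;> ring
    _ = ∑ x : Fin 9 → G p n, ∑ ξ : G p n, ∑ η : G p n, (∏ i, (f (x i) : ℂ)) *
          (ψ p (dot p n ξ (x 0 - x 1 + x 2 - x 3)) *
           ψ p (dot p n η (x 4 - x 5 + x 6 - x 7 + x 8))) := by
        refine Finset.sum_congr rfl fun x _ => ?_
        rw [Finset.sum_mul_sum, Finset.mul_sum]
        refine Finset.sum_congr rfl fun ξ _ => ?_
        rw [Finset.mul_sum]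
    _ = ∑ ξ : G p n, ∑ η : G p n, ∑ x : Fin 9 → G p n, (∏ i, (f (x i) : ℂ)) *
          (ψ p (dot p n ξ (x 0 - x 1 + x 2 - x 3)) *
           ψ p (dot p n η (x 4 - x 5 + x 6 - x 7 + x 8))) := by
        rw [Finset.sum_comm]
        exact Finset.sum_congr rfl fun ξ _ => Finset.sum_comm
    _ = ∑ ξ : G p n, ∑ η : G p n,
          (Sf p n f ξ * Sf p n f (-ξ)) ^ 2 * ((Sf p n f η * Sf p n f (-η)) ^ 2 * Sf p n f η) := by
        refine Finset.sum_congr rfl fun ξ _ => Finset.sum_congr rfl fun η _ => ?_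
        rw [← prodeval, ← fub]
        exact Finset.sum_congr rfl fun x _ => split ξ η x
    _ = (∑ ξ : G p n, (Sf p n f ξ * Sf p n f (-ξ)) ^ 2)
        * (∑ η : G p n, (Sf p n f η * Sf p n f (-η)) ^ 2 * Sf p n f η) := by
        rw [Finset.sum_mul_sum]

lemma dot_neg_right (ξ a : G p n) : dot p n ξ (-a) = - dot p n ξ a := by
  rw [dot_comm, dot_neg_left, dot_comm]

lemma psi_mul_psi (s t : ZMod p) : ψ p s * ψ p t = ψ p (s + t) :=
  (AddChar.map_add_eq_mul _ s t).symm

lemma Sf_neg (f : G p n → ℝ) (ξ : G p n) :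
    Sf p n f (-ξ) = (starRingEnd ℂ) (Sf p n f ξ) := by
  rw [Sf, Sf, map_sum]
  refine Finset.sum_congr rfl fun x _ => ?_
  rw [map_mul, Complex.conj_ofReal, psi_conj, dot_neg_left]

lemma Sf_zero (f : G p n → ℝ) : Sf p n f 0 = ((∑ x, f x : ℝ) : ℂ) := by
  rw [Sf]
  push_cast
  refine Finset.sum_congr rfl fun x _ => ?_
  rw [dot_zero_left, AddChar.map_zero_eq_one, mul_one]

lemma sum_psi_dot' (v : G p n) (hv : v ≠ 0) : ∑ x : G p n, ψ p (dot p n v x) = 0 := by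
  have h := sum_psi_dot p n v
  rw [if_neg hv] at h
  rw [← h]
  exact Finset.sum_congr rfl fun x _ => by rw [dot_comm]

lemma Sf_one (ξ : G p n) :
    Sf p n (fun _ => (1:ℝ)) ξ = if ξ = 0 then ((p:ℂ))^n else 0 := by
  by_cases h : ξ = 0
  · subst h
    rw [Sf_zero, if_pos rfl]
    push_cast
    simp [Finset.card_univ, ZMod.card]
  · rw [if_neg h, Sf]
    simp only [Complex.ofReal_one, one_mul]
    exact sum_psi_dot' p n ξ h

lemma parseval (f : G p n → ℝ) :
    ∑ ξ : G p n, (Complex.normSq (Sf p n f ξ) : ℂ) = (p:ℂ)^n * ∑ x, ((f x : ℂ))^2 := by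
  classical
  have expand : ∀ ξ : G p n, (Complex.normSq (Sf p n f ξ) : ℂ)
      = ∑ x : G p n, ∑ y : G p n, ((f x : ℂ) * (f y : ℂ)) * ψ p (dot p n ξ (x - y)) := by
    intro ξ
    rw [← Complex.mul_conj, Sf, map_sum, Finset.sum_mul_sum]
    refine Finset.sum_congr rfl fun x _ => Finset.sum_congr rfl fun y _ => ?_
    rw [map_mul, Complex.conj_ofReal, psi_conj, dot_sub_right, sub_eq_add_neg,
      ← dot_neg_right, ← psi_mul_psi]
    ring
  calc ∑ ξ : G p n, (Complex.normSq (Sf p n f ξ) : ℂ)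
      = ∑ ξ : G p n, ∑ x : G p n, ∑ y : G p n,
          ((f x : ℂ) * (f y : ℂ)) * ψ p (dot p n ξ (x - y)) :=
        Finset.sum_congr rfl fun ξ _ => expand ξ
    _ = ∑ x : G p n, ∑ y : G p n, ((f x : ℂ) * (f y : ℂ)) *
          ∑ ξ : G p n, ψ p (dot p n ξ (x - y)) := by
        rw [Finset.sum_comm]
        refine Finset.sum_congr rfl fun x _ => ?_
        rw [Finset.sum_comm]
        exact Finset.sum_congr rfl fun y _ => by rw [Finset.mul_sum]
    _ = ∑ x : G p n, ∑ y : G p n, ((f x : ℂ) * (f y : ℂ)) *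
          (if x - y = 0 then ((p:ℂ))^n else 0) := by
        exact Finset.sum_congr rfl fun x _ => Finset.sum_congr rfl fun y _ => by
          rw [sum_psi_dot]
    _ = ∑ x : G p n, ((f x : ℂ))^2 * ((p:ℂ))^n := by
        refine Finset.sum_congr rfl fun x _ => ?_
        rw [Finset.sum_eq_single x]
        · simp [sq]
        · intro y _ hy
          rw [if_neg (by simpa [sub_eq_zero] using (Ne.symm hy)), mul_zero]
        · intro h; exact absurd (Finset.mem_univ x) h
    _ = (p:ℂ)^n * ∑ x, ((f x : ℂ))^2 := by rw [← Finset.sum_mul, mul_comm]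

lemma card_G : (Fintype.card (G p n) : ℝ) = (p:ℝ)^n := by
  simp [ZMod.card]

lemma re_sq_key (u : ℂ) : (u.re)^2 = (Complex.normSq u + (u^2).re)/2 := by
  simp only [pow_two, Complex.mul_re, Complex.normSq_apply]
  ring

lemma Sf_bound (hp : p.Prime) (hodd : Odd p) (f : G p n → ℝ)
    (hf : ∀ x, 0 ≤ f x ∧ f x ≤ 1) {η : G p n} (hη : η ≠ 0) :
    ‖Sf p n f η‖ ≤ (99/280 : ℝ) * (p:ℝ)^n := by
  classical
  haveI : Fact p.Prime := ⟨hp⟩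
  set z := Sf p n f η with hz
  set W := ‖z‖ with hWdef
  set N := ((p:ℝ))^n with hNdef
  have hppos : (0:ℝ) < (p:ℝ) := by exact_mod_cast Nat.pos_of_ne_zero (NeZero.ne p)
  have hN : (0:ℝ) < N := by rw [hNdef]; exact pow_pos hppos n
  by_cases hz0 : z = 0
  · have hW : W = 0 := by rw [hWdef, hz0, norm_zero]
    rw [hW]
    nlinarith [hN]
  have hW0 : 0 < W := by rwa [hWdef, norm_pos_iff]
  set w := (starRingEnd ℂ) z with hw
  set r : G p n → ℝ := fun x => (w * ψ p (dot p n η x)).re with hr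
  -- (1) W^2 = ∑ f x * r x
  have h1 : W^2 = ∑ x : G p n, f x * r x := by
    have : w * z = ∑ x : G p n, (f x : ℂ) * (w * ψ p (dot p n η x)) := by
      rw [hz, Sf, Finset.mul_sum]
      exact Finset.sum_congr rfl fun x _ => by ring
    have h2 : (w * z).re = ∑ x : G p n, f x * r x := by
      rw [this, Complex.re_sum]
      exact Finset.sum_congr rfl fun x _ => by
        rw [hr]; simp [Complex.mul_re]
    rw [← h2, hw, mul_comm, Complex.mul_conj, hWdef, ← Complex.sq_norm, Complex.ofReal_re]
  -- (2) pointwise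
  have h2 : ∀ x, f x * r x ≤ (r x + |r x|)/2 := by
    intro x
    rcases le_or_gt 0 (r x) with h | h
    · rw [abs_of_nonneg h]
      nlinarith [(hf x).1, (hf x).2]
    · rw [abs_of_neg h]
      nlinarith [(hf x).1, (hf x).2]
  -- (3) sum of r = 0
  have h3 : ∑ x : G p n, r x = 0 := by
    have : ∑ x : G p n, (w * ψ p (dot p n η x)) = 0 := by
      rw [← Finset.mul_sum, sum_psi_dot' p n η hη, mul_zero]
    calc ∑ x : G p n, r x = (∑ x : G p n, (w * ψ p (dot p n η x))).re := by
          rw [Complex.re_sum]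
      _ = 0 := by rw [this]; rfl
  -- (4) sum of r^2 = N * W^2 / 2
  have h2eta : η + η ≠ 0 := by
    intro h
    apply hη
    funext i
    have hc := congrFun h i
    simp only [Pi.add_apply, Pi.zero_apply] at hc
    have h2' : (2 : ZMod p) * η i = 0 := by rw [two_mul]; exact hc
    have h2ne : (2 : ZMod p) ≠ 0 := by
      intro hcon
      have hdvd : p ∣ 2 := (ZMod.natCast_eq_zero_iff 2 p).mp (by exact_mod_cast hcon)
      have hp2 : p = 2 := (Nat.prime_dvd_prime_iff_eq hp Nat.prime_two).mp hdvd
      rw [hp2] at hodd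
      exact (Nat.not_odd_iff_even.mpr (by decide)) hodd
    exact (mul_eq_zero.mp h2').resolve_left h2ne
  have h4 : ∑ x : G p n, (r x)^2 = N * W^2 / 2 := by
    have key : ∀ u : ℂ, (u.re)^2 = (Complex.normSq u + (u^2).re)/2 := re_sq_key
    have hsq : ∀ x : G p n, (w * ψ p (dot p n η x))^2 = w^2 * ψ p (dot p n (η + η) x) := by
      intro x
      have : dot p n (η + η) x = dot p n η x + dot p n η x := by
        rw [dot_comm, dot_add_right, dot_comm]
      rw [this, ← psi_mul_psi]
      ring
    have hns : ∀ x : G p n, Complex.normSq (w * ψ p (dot p n η x)) = W^2 := by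
      intro x
      rw [Complex.normSq_mul, ← Complex.sq_norm, ← Complex.sq_norm]
      have habs : ‖ψ p (dot p n η x)‖ = 1 := by
        rw [ZMod.stdAddChar_apply]; exact Circle.norm_coe _
      rw [habs, hw, Complex.norm_conj, ← hWdef]
      ring
    have hsum2 : ∑ x : G p n, ((w * ψ p (dot p n η x))^2).re = 0 := by
      have : ∑ x : G p n, (w * ψ p (dot p n η x))^2 = 0 := by
        calc ∑ x : G p n, (w * ψ p (dot p n η x))^2
            = ∑ x : G p n, w^2 * ψ p (dot p n (η + η) x) :=
              Finset.sum_congr rfl fun x _ => hsq x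
          _ = w^2 * ∑ x : G p n, ψ p (dot p n (η + η) x) := by rw [Finset.mul_sum]
          _ = 0 := by rw [sum_psi_dot' p n (η + η) h2eta, mul_zero]
      rw [← Complex.re_sum, this]; rfl
    calc ∑ x : G p n, (r x)^2
        = ∑ x : G p n, (Complex.normSq (w * ψ p (dot p n η x))
            + ((w * ψ p (dot p n η x))^2).re)/2 :=
          Finset.sum_congr rfl fun x _ => key _
      _ = (∑ x : G p n, Complex.normSq (w * ψ p (dot p n η x))
            + ∑ x : G p n, ((w * ψ p (dot p n η x))^2).re)/2 := by
          rw [← Finset.sum_add_distrib, Finset.sum_div]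
      _ = (∑ x : G p n, W^2 + 0)/2 := by
          rw [hsum2]
          congr 1
          simp only [add_zero]
          exact Finset.sum_congr rfl fun x _ => hns x
      _ = N * W^2 / 2 := by
          rw [Finset.sum_const, Finset.card_univ, nsmul_eq_mul, add_zero, hNdef, card_G p n]
  -- (5) per-term AM-GM
  have h5 : W * ∑ x : G p n, |r x| ≤ (5/14) * N * W^2 + (7/10) * (N * W^2 / 2) := by
    have hper : ∀ x : G p n, W * |r x| ≤ (5/14) * W^2 + (7/10) * (r x)^2 := by
      intro x
      nlinarith [sq_nonneg (5*W - 7*|r x|), sq_abs (r x), abs_nonneg (r x), hW0.le]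
    calc W * ∑ x : G p n, |r x| = ∑ x : G p n, W * |r x| := Finset.mul_sum _ _ _
      _ ≤ ∑ x : G p n, ((5/14) * W^2 + (7/10) * (r x)^2) :=
          Finset.sum_le_sum fun x _ => hper x
      _ = (5/14) * N * W^2 + (7/10) * (N * W^2 / 2) := by
          rw [Finset.sum_add_distrib, Finset.sum_const, Finset.card_univ, ← Finset.mul_sum, h4,
            nsmul_eq_mul]
          have hcard : (Fintype.card (G p n) : ℝ) = N := by rw [hNdef]; exact card_G p n
          rw [hcard]
          ring
  -- assemble
  have hW2 : W^2 ≤ (∑ x : G p n, |r x|)/2 := by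
    rw [h1]
    calc ∑ x : G p n, f x * r x ≤ ∑ x : G p n, (r x + |r x|)/2 :=
          Finset.sum_le_sum fun x _ => h2 x
      _ = ((∑ x : G p n, r x) + ∑ x : G p n, |r x|)/2 := by
          rw [← Finset.sum_add_distrib, Finset.sum_div]
      _ = (∑ x : G p n, |r x|)/2 := by rw [h3, zero_add]
  have habs_nonneg : 0 ≤ ∑ x : G p n, |r x| := Finset.sum_nonneg fun x _ => abs_nonneg _
  nlinarith [mul_le_mul_of_nonneg_left hW2 hW0.le, hW0, mul_pos hW0 hW0]

lemma card_phiSols : (((phiSols p n).card : ℝ)) = (p:ℝ)^(7*n) := by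
  classical
  have hm := master p n (fun _ => (1:ℝ))
  simp only [Finset.prod_const_one, Finset.sum_const, nsmul_eq_mul, mul_one] at hm
  have hS : ∀ ξ : G p n, Sf p n (fun _ => (1:ℝ)) ξ = if ξ = 0 then ((p:ℂ))^n else 0 :=
    Sf_one p n
  have hA : (∑ ξ : G p n, (Sf p n (fun _ => (1:ℝ)) ξ * Sf p n (fun _ => (1:ℝ)) (-ξ))^2)
      = ((p:ℂ))^(4*n) := by
    rw [Finset.sum_eq_single (0 : G p n)]
    · rw [neg_zero, hS 0, if_pos rfl]; ring
    · intro ξ _ hξ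
      rw [hS ξ, if_neg hξ]; ring
    · intro h; exact absurd (Finset.mem_univ _) h
  have hB : (∑ η : G p n, (Sf p n (fun _ => (1:ℝ)) η * Sf p n (fun _ => (1:ℝ)) (-η))^2
        * Sf p n (fun _ => (1:ℝ)) η) = ((p:ℂ))^(5*n) := by
    rw [Finset.sum_eq_single (0 : G p n)]
    · rw [neg_zero, hS 0, if_pos rfl]; ring
    · intro η _ hη
      rw [hS η, if_neg hη]; ring
    · intro h; exact absurd (Finset.mem_univ _) h
  rw [hA, hB] at hm
  have hpne : ((p:ℂ)) ≠ 0 := by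
    exact_mod_cast (Nat.cast_ne_zero (R := ℂ)).mpr (NeZero.ne p)
  have hcalc : ((p:ℂ))^(4*n) * ((p:ℂ))^(5*n) = ((p:ℂ))^(7*n) * ((p:ℂ))^(2*n) := by
    rw [← pow_add, ← pow_add]
    congr 1
    ring
  rw [hcalc] at hm
  have hcard : ((((phiSols p n).card : ℝ)) : ℂ) = ((p:ℂ))^(7*n) :=
    mul_right_cancel₀ (pow_ne_zero _ hpne) hm
  exact_mod_cast hcard

lemma keynum (a : ℝ) (h1 : 0.45 ≤ a) (h2 : a ≤ 1) :
    a^4 * (a^5 - (99/280:ℝ)^3 * (a - a^2)) ≥ 0.0001 := by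
  nlinarith [pow_le_pow_left₀ (by norm_num : (0:ℝ) ≤ 0.45) h1 9,
    sq_nonneg (a - 0.45), sq_nonneg a,
    pow_le_pow_left₀ (by norm_num : (0:ℝ) ≤ 0.45) h1 4]

end PhiAux

set_option maxHeartbeats 1000000 in
open PhiAux in
theorem phi_prevalent (p : ℕ) [NeZero p] (hp : p.Prime) (hodd : Odd p) :
    ∃ c₀ > (0 : ℝ), ∀ n ≥ 1, ∀ f : G p n → ℝ, (∀ x, 0 ≤ f x ∧ f x ≤ 1) →
      expect p n f ≥ 0.45 → Tphi p n f ≥ c₀ := by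
  classical
  refine ⟨0.0001, by norm_num, ?_⟩
  intro n hn f hf hexp
  set N : ℝ := (p:ℝ)^n with hNdef
  have hppos : (0:ℝ) < (p:ℝ) := by exact_mod_cast Nat.pos_of_ne_zero (NeZero.ne p)
  have hN : (0:ℝ) < N := by rw [hNdef]; exact pow_pos hppos n
  set s0 : ℝ := ∑ x, f x with hs0def
  set F2 : ℝ := ∑ x, (f x)^2 with hF2def
  set M : ℝ := (99/280 : ℝ) with hMdef
  -- basic real facts
  have hs0lb : 0.45 * N ≤ s0 := by
    have : (0.45 : ℝ) ≤ s0 / N := hexp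
    calc 0.45 * N ≤ (s0 / N) * N := by nlinarith
      _ = s0 := by field_simp
  have hs0ub : s0 ≤ N := by
    calc s0 ≤ ∑ _x : G p n, (1:ℝ) := Finset.sum_le_sum fun x _ => (hf x).2
      _ = (Fintype.card (G p n) : ℝ) := by rw [Finset.sum_const, Finset.card_univ]; simp
      _ = N := by rw [hNdef]; simp [ZMod.card]
  have hs0pos : 0 < s0 := by nlinarith
  have hF2ub : F2 ≤ s0 := by
    refine Finset.sum_le_sum fun x _ => ?_
    nlinarith [(hf x).1, (hf x).2]
  -- real form of master identity
  set A : ℝ := ∑ ξ : G p n, (Complex.normSq (Sf p n f ξ))^2 with hAdef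
  set Bre : ℝ := ∑ η : G p n, (Complex.normSq (Sf p n f η))^2 * (Sf p n f η).re with hBdef
  set num : ℝ := ∑ x ∈ phiSols p n, ∏ i, f (x i) with hnumdef
  have hmC := master p n f
  have hAC : (∑ ξ : G p n, (Sf p n f ξ * Sf p n f (-ξ)) ^ 2) = ((A : ℝ) : ℂ) := by
    rw [hAdef]
    push_cast
    refine Finset.sum_congr rfl fun ξ _ => ?_
    rw [Sf_neg, Complex.mul_conj]
  have hBC : (∑ η : G p n, (Sf p n f η * Sf p n f (-η)) ^ 2 * Sf p n f η)
      = ∑ η : G p n, ((Complex.normSq (Sf p n f η) : ℂ))^2 * Sf p n f η := by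
    refine Finset.sum_congr rfl fun η _ => ?_
    rw [Sf_neg, Complex.mul_conj]
  have hmain : num * N^2 = A * Bre := by
    have hre : (((num * N^2 : ℝ)) : ℂ) = ((A:ℝ):ℂ) *
        ∑ η : G p n, ((Complex.normSq (Sf p n f η) : ℂ))^2 * Sf p n f η := by
      rw [← hAC, ← hBC, ← hmC, hnumdef, hNdef]
      push_cast
      rw [← pow_mul]
      ring
    have := congrArg Complex.re hre
    rw [Complex.ofReal_re] at this
    rw [this, Complex.mul_re]
    simp only [Complex.ofReal_re, Complex.ofReal_im, zero_mul, sub_zero]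
    congr 1
    rw [Complex.re_sum]
    rw [hBdef]
    refine Finset.sum_congr rfl fun η _ => ?_
    simp [Complex.mul_re, ← Complex.ofReal_pow]
  -- bounds
  have hterm_nonneg : ∀ ξ : G p n, (0:ℝ) ≤ (Complex.normSq (Sf p n f ξ))^2 :=
    fun ξ => by positivity
  have hS0 : Complex.normSq (Sf p n f 0) = s0^2 := by
    rw [Sf_zero, Complex.normSq_ofReal, hs0def, sq]
  have hA_lb : (s0^2)^2 ≤ A := by
    rw [hAdef, ← hS0]
    exact Finset.single_le_sum (fun ξ _ => hterm_nonneg ξ) (Finset.mem_univ 0)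
  have hPar : ∑ η : G p n, Complex.normSq (Sf p n f η) = N * F2 := by
    have h := parseval p n f
    have : ((∑ η : G p n, Complex.normSq (Sf p n f η) : ℝ) : ℂ) = (((N * F2 : ℝ)) : ℂ) := by
      push_cast
      rw [h, hNdef, hF2def]
      push_cast
      ring
    exact_mod_cast this
  have hBre_lb : s0^5 - (M*N)^3 * (N*F2 - s0^2) ≤ Bre := by
    have hsplit : Bre = (Complex.normSq (Sf p n f 0))^2 * (Sf p n f 0).re
        + ∑ η ∈ Finset.univ.erase 0, (Complex.normSq (Sf p n f η))^2 * (Sf p n f η).re := by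
      rw [hBdef, ← Finset.add_sum_erase _ _ (Finset.mem_univ 0)]
    have hzeroterm : (Complex.normSq (Sf p n f 0))^2 * (Sf p n f 0).re = s0^5 := by
      rw [hS0, Sf_zero, Complex.ofReal_re, ← hs0def]
      ring
    have hErase : ∀ η ∈ Finset.univ.erase (0 : G p n),
        -((M*N)^3 * Complex.normSq (Sf p n f η)) ≤
          (Complex.normSq (Sf p n f η))^2 * (Sf p n f η).re := by
      intro η hη
      have hηne : η ≠ 0 := (Finset.mem_erase.mp hη).1
      have hab : ‖Sf p n f η‖ ≤ M * N := by
        rw [hMdef, hNdef]; exact Sf_bound p n hp hodd f hf hηne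
      set a : ℝ := ‖Sf p n f η‖ with hadef
      have ha0 : 0 ≤ a := norm_nonneg _
      have hre : -a ≤ (Sf p n f η).re := by
        have := Complex.abs_re_le_norm (Sf p n f η)
        rw [← hadef] at this
        cases abs_le.mp this with | intro h1 h2 => exact h1
      have hnsq : Complex.normSq (Sf p n f η) = a^2 := by
        rw [hadef, Complex.sq_norm]
      have h3 : a^3 ≤ (M*N)^3 := pow_le_pow_left₀ ha0 hab 3
      rw [hnsq]
      nlinarith [mul_le_mul_of_nonneg_right h3 (sq_nonneg a),
        mul_le_mul_of_nonneg_left hre (pow_nonneg ha0 4)]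
    have hEsum : ∑ η ∈ Finset.univ.erase (0 : G p n), Complex.normSq (Sf p n f η)
        = N * F2 - s0^2 := by
      have hadd : Complex.normSq (Sf p n f 0)
          + ∑ η ∈ Finset.univ.erase 0, Complex.normSq (Sf p n f η) = N * F2 := by
        have := Finset.add_sum_erase Finset.univ (fun η => Complex.normSq (Sf p n f η))
          (Finset.mem_univ (0 : G p n))
        rw [hPar] at this
        simpa using this
      rw [hS0] at hadd
      linarith
    calc s0^5 - (M*N)^3 * (N*F2 - s0^2)
        = s0^5 + ∑ η ∈ Finset.univ.erase (0 : G p n),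
            (-((M*N)^3 * Complex.normSq (Sf p n f η))) := by
          rw [Finset.sum_neg_distrib, ← Finset.mul_sum, hEsum]
          ring
      _ ≤ (Complex.normSq (Sf p n f 0))^2 * (Sf p n f 0).re
          + ∑ η ∈ Finset.univ.erase 0, (Complex.normSq (Sf p n f η))^2 * (Sf p n f η).re := by
          rw [hzeroterm]
          refine add_le_add (le_refl _) (Finset.sum_le_sum ?_)
          intro η hη
          simpa using hErase η hη
      _ = Bre := hsplit.symm
  -- numeric endgame
  have hα1 : (0.45:ℝ) ≤ s0/N := hexp
  have hα2 : s0/N ≤ 1 := (div_le_one hN).mpr hs0ub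
  clear_value N s0 F2 M A Bre num
  have hkey := keynum (s0/N) hα1 hα2
  have hL_eq : (s0^2)^2 * (s0^5 - (M*N)^3 * (N*s0 - s0^2))
      = ((s0/N)^4 * ((s0/N)^5 - M^3 * ((s0/N) - (s0/N)^2))) * N^9 := by
    field_simp
  have hL9 : (s0^2)^2 * (s0^5 - (M*N)^3 * (N*s0 - s0^2)) ≥ 0.0001 * N^9 := by
    rw [hL_eq, hMdef]
    exact mul_le_mul_of_nonneg_right hkey (pow_nonneg hN.le 9)
  have hLpos : 0 < s0^5 - (M*N)^3 * (N*s0 - s0^2) := by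
    set L := s0^5 - (M*N)^3 * (N*s0 - s0^2) with hLdef
    clear_value L
    by_contra hcon
    push_neg at hcon
    have h1 : (s0^2)^2 * L ≤ 0 := by nlinarith [sq_nonneg (s0^2)]
    have h0 : (0:ℝ) < 0.0001 * N^9 := by positivity
    linarith [hL9, h1, h0]
  have hBre_pos : 0 ≤ Bre := by
    have hMN3 : 0 ≤ (M*N)^3 := by positivity
    have : (M*N)^3 * (N*F2 - s0^2) ≤ (M*N)^3 * (N*s0 - s0^2) := by
      have : N*F2 ≤ N*s0 := by nlinarith
      nlinarith
    nlinarith [hBre_lb]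
  have hAB : A * Bre ≥ 0.0001 * N^9 := by
    have h1 : (s0^2)^2 * Bre ≤ A * Bre := mul_le_mul_of_nonneg_right hA_lb hBre_pos
    have h2 : (s0^2)^2 * (s0^5 - (M*N)^3 * (N*F2 - s0^2)) ≤ (s0^2)^2 * Bre :=
      mul_le_mul_of_nonneg_left hBre_lb (by positivity)
    have h3 : (s0^2)^2 * (s0^5 - (M*N)^3 * (N*s0 - s0^2))
        ≤ (s0^2)^2 * (s0^5 - (M*N)^3 * (N*F2 - s0^2)) := by
      have hMN3 : 0 ≤ (M*N)^3 := by positivity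
      have hns : N*F2 ≤ N*s0 := by nlinarith
      have hprod : 0 ≤ (s0^2)^2 * ((M*N)^3 * (N*s0 - N*F2)) :=
        mul_nonneg (by positivity) (mul_nonneg hMN3 (by linarith))
      nlinarith [hprod]
    linarith [hL9, h1, h2, h3]
  -- conclude
  have hcard : ((phiSols p n).card : ℝ) = N^7 := by
    rw [card_phiSols, hNdef, ← pow_mul, mul_comm]
  have hT : Tphi p n f = num / N^7 := by
    rw [Tphi, ← hnumdef, hcard]
  rw [hT, ge_iff_le, le_div_iff₀ (by positivity)]
  have hnum : num * N^2 ≥ (0.0001 * N^7) * N^2 := by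
    rw [hmain]
    calc (0.0001 * N^7) * N^2 = 0.0001 * N^9 := by ring
      _ ≤ A * Bre := hAB
  exact le_of_mul_le_mul_right (by linarith [hnum]) (pow_pos hN 2)
end

section
/- Let p be an odd prime. For every n ≥ 1 and every f : 𝔽_p^n → ℝ with 0 ≤ f ≤ 1 and 𝔼f = 1/2, we have T(f) + T(1 − f) ≥ 2⁻³, where T(f) = 𝔼_{x,d,y ∈ 𝔽_p^n} f(x)·f(x+d)·f(x+2d)·f(y). (In other words, the system obtained by adding one free variable to a three-term arithmetic progression is common among functions of mean 1/2, even though it is not common in general.) -/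
open Finset

/-- The normalised count of 3-term arithmetic progressions together with one free
variable: `T(f) = 𝔼_{x,d,y} f(x)·f(x+d)·f(x+2d)·f(y)`. -/
noncomputable def T3APfree (p n : ℕ) [NeZero p] (f : G p n → ℝ) : ℝ :=
  (∑ x : G p n, ∑ d : G p n, ∑ y : G p n, f x * f (x + d) * f (x + d + d) * f y) /
    (p : ℝ) ^ (3 * n)

theorem threeAP_free_common_at_half (p : ℕ) [NeZero p] (hp : p.Prime) (hodd : Odd p)
    (n : ℕ) (hn : 1 ≤ n) (f : G p n → ℝ) (hf : ∀ x, 0 ≤ f x ∧ f x ≤ 1)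
    (hmean : expect p n f = 1 / 2) :
    T3APfree p n f + T3APfree p n (fun x => 1 - f x) ≥ (2 : ℝ) ^ (-3 : ℤ) := by
  haveI : Fact p.Prime := ⟨hp⟩
  have h2 : (2 : ZMod p) ≠ 0 := by
    have hpd : ¬ (p ∣ 2) := by
      intro h
      have h2 := (Nat.prime_dvd_prime_iff_eq hp Nat.prime_two).mp h
      rw [h2, Nat.odd_iff] at hodd; omega
    have : ((2:ℕ) : ZMod p) ≠ 0 := by
      rw [Ne, ZMod.natCast_eq_zero_iff]; exact hpd
    simpa using this
  set N : ℝ := (p:ℝ)^n with hNdef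
  have hppos : (0:ℝ) < p := by
    have := Nat.pos_of_ne_zero (NeZero.ne p); exact_mod_cast this
  have hNpos : (0:ℝ) < N := by positivity
  have hcard : (Fintype.card (G p n) : ℝ) = N := by simp [ZMod.card, hNdef]
  -- basic sum manipulation lemmas
  have hshift : ∀ (g : G p n → ℝ) (c : G p n), ∑ x, g (x + c) = ∑ x, g x := fun g c =>
    Fintype.sum_equiv (Equiv.addRight c) _ _ (fun _ => rfl)
  have hdouble : ∀ (g : G p n → ℝ), ∑ d, g (d + d) = ∑ d, g d := by
    intro g
    have hbij : Function.Bijective (fun d : G p n => d + d) := by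
      rw [← Finite.injective_iff_bijective]
      intro a b hab
      have h : (2:ZMod p) • a = (2:ZMod p) • b := by simpa [two_smul] using hab
      have h' := congrArg (fun t => (2:ZMod p)⁻¹ • t) h
      simpa [smul_smul, inv_mul_cancel₀ h2] using h'
    exact Fintype.sum_bijective _ hbij _ _ (fun _ => rfl)
  set S : ℝ := ∑ x, f x with hSdef
  have hS : S = N / 2 := by
    have : S / N = 1 / 2 := hmean
    field_simp at this; linarith
  set A : ℝ := ∑ x : G p n, ∑ d : G p n, f x * f (x + d) * f (x + d + d) with hAdef
  -- pairwise and linear sums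
  have tb : ∀ x : G p n, ∑ d : G p n, f (x + d) = S := by
    intro x
    calc ∑ d : G p n, f (x + d) = ∑ d : G p n, f (d + x) := by
          simp only [add_comm]
      _ = S := hshift f x
  have tc : ∀ x : G p n, ∑ d : G p n, f (x + d + d) = S := by
    intro x
    calc ∑ d : G p n, f (x + d + d) = ∑ d : G p n, f (x + (d + d)) := by
          simp only [add_assoc]
      _ = ∑ d : G p n, f (x + d) := hdouble (fun t => f (x + t))
      _ = S := tb x
  have tbc : ∑ x : G p n, ∑ d : G p n, f (x + d) * f (x + d + d) = S ^ 2 := by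
    rw [Finset.sum_comm]
    have inner : ∀ d : G p n, ∑ x : G p n, f (x + d) * f (x + d + d)
        = ∑ x : G p n, f x * f (x + d) := by
      intro d
      exact hshift (fun t => f t * f (t + d)) d
    calc ∑ d : G p n, ∑ x : G p n, f (x + d) * f (x + d + d)
        = ∑ d : G p n, ∑ x : G p n, f x * f (x + d) := by
          exact Finset.sum_congr rfl (fun d _ => inner d)
      _ = ∑ x : G p n, ∑ d : G p n, f x * f (x + d) := Finset.sum_comm
      _ = ∑ x : G p n, f x * S := by
          refine Finset.sum_congr rfl (fun x _ => ?_)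
          rw [← Finset.mul_sum, tb x]
      _ = S * S := by rw [← Finset.sum_mul]
      _ = S ^ 2 := by ring
  -- the sum of the "complement" triple products
  have hB : ∑ x : G p n, ∑ d : G p n,
      (1 - f x) * (1 - f (x + d)) * (1 - f (x + d + d))
      = N ^ 2 - 3 * (N * S) + 3 * S ^ 2 - A := by
    have expand : ∀ x d : G p n,
        (1 - f x) * (1 - f (x + d)) * (1 - f (x + d + d))
        = 1 - f x - f (x + d) - f (x + d + d)
          + (f x * f (x + d) + f x * f (x + d + d) + f (x + d) * f (x + d + d))
          - f x * f (x + d) * f (x + d + d) := by intro x d; ring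
    simp only [expand, Finset.sum_add_distrib, Finset.sum_sub_distrib]
    have e1 : ∑ x : G p n, ∑ _d : G p n, (1:ℝ) = N ^ 2 := by
      simp [Finset.sum_const, card_univ]
      rw [hNdef]; ring
    have e2 : ∑ x : G p n, ∑ _d : G p n, f x = N * S := by
      simp only [Finset.sum_const, card_univ, nsmul_eq_mul]
      rw [← Finset.mul_sum, hcard]
    have e3 : ∑ x : G p n, ∑ d : G p n, f (x + d) = N * S := by
      simp only [tb, Finset.sum_const, card_univ, nsmul_eq_mul, hcard]
    have e4 : ∑ x : G p n, ∑ d : G p n, f (x + d + d) = N * S := by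
      simp only [tc, Finset.sum_const, card_univ, nsmul_eq_mul, hcard]
    have e5 : ∑ x : G p n, ∑ d : G p n, f x * f (x + d) = S ^ 2 := by
      calc ∑ x : G p n, ∑ d : G p n, f x * f (x + d) = ∑ x : G p n, f x * S := by
            refine Finset.sum_congr rfl (fun x _ => ?_)
            rw [← Finset.mul_sum, tb x]
        _ = S ^ 2 := by rw [← Finset.sum_mul]; ring
    have e6 : ∑ x : G p n, ∑ d : G p n, f x * f (x + d + d) = S ^ 2 := by
      calc ∑ x : G p n, ∑ d : G p n, f x * f (x + d + d) = ∑ x : G p n, f x * S := by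
            refine Finset.sum_congr rfl (fun x _ => ?_)
            rw [← Finset.mul_sum, tc x]
        _ = S ^ 2 := by rw [← Finset.sum_mul]; ring
    rw [e1, e2, e3, e4, e5, e6, tbc, ← hAdef]
    ring
  -- rewrite both T values
  have hpow : (p:ℝ) ^ (3 * n) = N ^ 3 := by
    rw [hNdef, ← pow_mul, mul_comm]
  have hTf : T3APfree p n f = A * S / N ^ 3 := by
    rw [T3APfree, hpow]
    congr 1
    calc ∑ x : G p n, ∑ d : G p n, ∑ y : G p n, f x * f (x + d) * f (x + d + d) * f y
        = ∑ x : G p n, ∑ d : G p n, (f x * f (x + d) * f (x + d + d)) * S := by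
          refine Finset.sum_congr rfl (fun x _ => Finset.sum_congr rfl (fun d _ => ?_))
          rw [← Finset.mul_sum]
      _ = A * S := by
          simp only [← Finset.sum_mul]; rfl
  have hsumg : ∑ y : G p n, (1 - f y) = N - S := by
    rw [Finset.sum_sub_distrib, Finset.sum_const, card_univ, nsmul_eq_mul, mul_one, hcard]
  have hTg : T3APfree p n (fun x => 1 - f x)
      = (N ^ 2 - 3 * (N * S) + 3 * S ^ 2 - A) * (N - S) / N ^ 3 := by
    rw [T3APfree, hpow]
    congr 1
    calc ∑ x : G p n, ∑ d : G p n, ∑ y : G p n,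
          (1 - f x) * (1 - f (x + d)) * (1 - f (x + d + d)) * (1 - f y)
        = ∑ x : G p n, ∑ d : G p n,
            ((1 - f x) * (1 - f (x + d)) * (1 - f (x + d + d))) * (N - S) := by
          refine Finset.sum_congr rfl (fun x _ => Finset.sum_congr rfl (fun d _ => ?_))
          rw [← Finset.mul_sum, hsumg]
      _ = (N ^ 2 - 3 * (N * S) + 3 * S ^ 2 - A) * (N - S) := by
          simp only [← Finset.sum_mul]; rw [hB]
  rw [hTf, hTg, hS]
  have hN3 : N ^ 3 ≠ 0 := by positivity
  have : A * (N / 2) / N ^ 3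
      + (N ^ 2 - 3 * (N * (N / 2)) + 3 * (N / 2) ^ 2 - A) * (N - N / 2) / N ^ 3
      = 1 / 8 := by
    field_simp
    ring
  rw [this]
  norm_num
end

section
/- Let p be an odd prime and n ≥ 1. For every f : 𝔽_p^n → ℝ, writing α = 𝔼f and g = f − α, we have T_Φ(f) + T_Φ(1 − f) = α⁹ + (1−α)⁹ + (α⁵ + (1−α)⁵)·T_{A₄}(g) + (α⁴ − (1−α)⁴)·T_{A₅}(g). -/
open Finset

/-- The set of solutions of `x₁ - x₂ + x₃ - x₄ = 0` in `(𝔽_p^n)^4`. -/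
def a4Sols (p n : ℕ) [NeZero p] : Finset (Fin 4 → G p n) :=
  Finset.univ.filter fun x => x 0 - x 1 + x 2 - x 3 = 0

/-- The set of solutions of `x₁ - x₂ + x₃ - x₄ + x₅ = 0` in `(𝔽_p^n)^5`. -/
def a5Sols (p n : ℕ) [NeZero p] : Finset (Fin 5 → G p n) :=
  Finset.univ.filter fun x => x 0 - x 1 + x 2 - x 3 + x 4 = 0

/-- `T_{A₄}(g)`: the average of `g(x₁)g(x₂)g(x₃)g(x₄)` over solutions of
`x₁ - x₂ + x₃ - x₄ = 0`. -/
noncomputable def TA4 (p n : ℕ) [NeZero p] (g : G p n → ℝ) : ℝ :=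
  (∑ x ∈ a4Sols p n, ∏ i, g (x i)) / (a4Sols p n).card

/-- `T_{A₅}(g)`: the average of `g(x₁)⋯g(x₅)` over solutions of
`x₁ - x₂ + x₃ - x₄ + x₅ = 0`. -/
noncomputable def TA5 (p n : ℕ) [NeZero p] (g : G p n → ℝ) : ℝ :=
  (∑ x ∈ a5Sols p n, ∏ i, g (x i)) / (a5Sols p n).card

/-! ### Auxiliary machinery -/

section Aux

variable (p n : ℕ) [NeZero p]

/-- Parametrized version of the sum over `a4Sols`. -/
noncomputable def S4 (h : G p n → ℝ) : ℝ :=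
  ∑ c : G p n, ∑ d : G p n, ∑ b : G p n, h (b + (d - c)) * (h b * (h c * h d))

/-- Parametrized version of the sum over `a5Sols`. -/
noncomputable def S5 (h : G p n → ℝ) : ℝ :=
  ∑ c : G p n, ∑ e : G p n, ∑ d : G p n, ∑ b : G p n,
    h (b + (d - e - c)) * (h b * (h c * (h d * h e)))

/-- Autocorrelation. -/
noncomputable def Ff (h : G p n → ℝ) (t : G p n) : ℝ := ∑ x : G p n, h (x + t) * h x

/-- Triple correlation. -/
noncomputable def Kf (h : G p n → ℝ) (t : G p n) : ℝ :=
  ∑ c : G p n, ∑ e : G p n, h c * (h (c + e + t) * h e)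

variable {p n}

lemma shiftR (h : G p n → ℝ) (t : G p n) : ∑ x : G p n, h (x + t) = ∑ x : G p n, h x :=
  Fintype.sum_equiv (Equiv.addRight t) _ _ (fun _ => rfl)

lemma shiftL (h : G p n → ℝ) (t : G p n) : ∑ x : G p n, h (t + x) = ∑ x : G p n, h x :=
  Fintype.sum_equiv (Equiv.addLeft t) _ _ (fun _ => rfl)

lemma sum_const_G (c : ℝ) : ∑ _x : G p n, c = (p : ℝ) ^ n * c := by
  rw [Finset.sum_const, Finset.card_univ]
  have : Fintype.card (G p n) = p ^ n := by simp [ZMod.card]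
  rw [this, nsmul_eq_mul]
  push_cast
  ring

lemma sum_mul_right (u : G p n → ℝ) (hu : ∑ x : G p n, u x = 0) (v : ℝ) :
    ∑ x : G p n, u x * v = 0 := by
  rw [← Finset.sum_mul, hu, zero_mul]

lemma sum_mul_left (u : G p n → ℝ) (hu : ∑ x : G p n, u x = 0) (v : ℝ) :
    ∑ x : G p n, v * u x = 0 := by
  rw [← Finset.mul_sum, hu, mul_zero]

/-! #### Parametrization lemmas -/

lemma sumA4 (h : G p n → ℝ) :
    ∑ y : G p n × G p n × G p n,
      h (y.2.2 + (y.2.1 - y.1)) * (h y.2.2 * (h y.1 * h y.2.1)) = S4 p n h := by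
  unfold S4
  simp only [Fintype.sum_prod_type]

lemma sumA5 (h : G p n → ℝ) :
    ∑ y : G p n × G p n × G p n × G p n,
      h (y.2.2.2 + (y.2.2.1 - y.2.1 - y.1)) *
        (h y.2.2.2 * (h y.1 * (h y.2.2.1 * h y.2.1))) = S5 p n h := by
  unfold S5
  simp only [Fintype.sum_prod_type]

lemma P4 (h : G p n → ℝ) : ∑ x ∈ a4Sols p n, ∏ i, h (x i) = S4 p n h := by
  have key : ∑ x ∈ a4Sols p n, ∏ i, h (x i)
      = ∑ y : G p n × G p n × G p n,
          h (y.2.2 + (y.2.1 - y.1)) * (h y.2.2 * (h y.1 * h y.2.1)) := by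
    refine Finset.sum_nbij' (fun x => (x 2, x 3, x 1))
      (fun y => ![y.2.2 + (y.2.1 - y.1), y.2.2, y.1, y.2.1]) ?_ ?_ ?_ ?_ ?_
    · intro a _; exact mem_univ _
    · intro y _
      simp only [a4Sols, mem_filter, mem_univ, true_and]
      show y.2.2 + (y.2.1 - y.1) - y.2.2 + y.1 - y.2.1 = 0
      ring
    · intro x hx
      simp only [a4Sols, mem_filter, mem_univ, true_and] at hx
      have hx0 : x 0 = x 1 + (x 3 - x 2) := by linear_combination hx
      funext i
      fin_cases i
      · exact hx0.symm
      · rfl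
      · rfl
      · rfl
    · intro y _; rfl
    · intro x hx
      simp only [a4Sols, mem_filter, mem_univ, true_and] at hx
      have hx0 : x 0 = x 1 + (x 3 - x 2) := by linear_combination hx
      rw [Fin.prod_univ_four]
      show h (x 0) * h (x 1) * h (x 2) * h (x 3)
        = h (x 1 + (x 3 - x 2)) * (h (x 1) * (h (x 2) * h (x 3)))
      rw [hx0]; ring
  rw [key]
  exact sumA4 h

lemma P5 (h : G p n → ℝ) : ∑ x ∈ a5Sols p n, ∏ i, h (x i) = S5 p n h := by
  have key : ∑ x ∈ a5Sols p n, ∏ i, h (x i)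
      = ∑ y : G p n × G p n × G p n × G p n,
          h (y.2.2.2 + (y.2.2.1 - y.2.1 - y.1)) *
            (h y.2.2.2 * (h y.1 * (h y.2.2.1 * h y.2.1))) := by
    refine Finset.sum_nbij' (fun x => (x 2, x 4, x 3, x 1))
      (fun y => ![y.2.2.2 + (y.2.2.1 - y.2.1 - y.1), y.2.2.2, y.1, y.2.2.1, y.2.1])
      ?_ ?_ ?_ ?_ ?_
    · intro a _; exact mem_univ _
    · intro y _
      simp only [a5Sols, mem_filter, mem_univ, true_and]
      show y.2.2.2 + (y.2.2.1 - y.2.1 - y.1) - y.2.2.2 + y.1 - y.2.2.1 + y.2.1 = 0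
      ring
    · intro x hx
      simp only [a5Sols, mem_filter, mem_univ, true_and] at hx
      have hx0 : x 0 = x 1 + (x 3 - x 4 - x 2) := by linear_combination hx
      funext i
      fin_cases i
      · exact hx0.symm
      · rfl
      · rfl
      · rfl
      · rfl
    · intro y _; rfl
    · intro x hx
      simp only [a5Sols, mem_filter, mem_univ, true_and] at hx
      have hx0 : x 0 = x 1 + (x 3 - x 4 - x 2) := by linear_combination hx
      rw [Fin.prod_univ_five]
      show h (x 0) * h (x 1) * h (x 2) * h (x 3) * h (x 4)
        = h (x 1 + (x 3 - x 4 - x 2)) * (h (x 1) * (h (x 2) * (h (x 3) * h (x 4))))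
      rw [hx0]; ring
  rw [key]
  exact sumA5 h

lemma prod_nine (u : Fin 9 → ℝ) : ∏ i, u i =
    u 0 * (u 1 * (u 2 * (u 3 * (u 4 * (u 5 * (u 6 * (u 7 * u 8))))))) := by
  simp only [Fin.prod_univ_succ, Fin.prod_univ_zero, mul_one]
  rfl

lemma P9 (h : G p n → ℝ) : ∑ x ∈ phiSols p n, ∏ i, h (x i) = S4 p n h * S5 p n h := by
  have key : ∑ x ∈ phiSols p n, ∏ i, h (x i)
      = ∑ y : (G p n × G p n × G p n) × (G p n × G p n × G p n × G p n),
          (h (y.1.2.2 + (y.1.2.1 - y.1.1)) * (h y.1.2.2 * (h y.1.1 * h y.1.2.1))) *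
          (h (y.2.2.2.2 + (y.2.2.2.1 - y.2.2.1 - y.2.1)) *
            (h y.2.2.2.2 * (h y.2.1 * (h y.2.2.2.1 * h y.2.2.1)))) := by
    refine Finset.sum_nbij' (fun x => ((x 2, x 3, x 1), (x 6, x 8, x 7, x 5)))
      (fun y => ![y.1.2.2 + (y.1.2.1 - y.1.1), y.1.2.2, y.1.1, y.1.2.1,
        y.2.2.2.2 + (y.2.2.2.1 - y.2.2.1 - y.2.1), y.2.2.2.2, y.2.1, y.2.2.2.1, y.2.2.1])
      ?_ ?_ ?_ ?_ ?_
    · intro a _; exact mem_univ _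
    · intro y _
      simp only [phiSols, mem_filter, mem_univ, true_and]
      refine ⟨?_, ?_⟩
      · show y.1.2.2 + (y.1.2.1 - y.1.1) - y.1.2.2 + y.1.1 - y.1.2.1 = 0
        ring
      · show y.2.2.2.2 + (y.2.2.2.1 - y.2.2.1 - y.2.1) - y.2.2.2.2 + y.2.1
            - y.2.2.2.1 + y.2.2.1 = 0
        ring
    · intro x hx
      simp only [phiSols, mem_filter, mem_univ, true_and] at hx
      have hx0 : x 0 = x 1 + (x 3 - x 2) := by linear_combination hx.1
      have hx4 : x 4 = x 5 + (x 7 - x 8 - x 6) := by linear_combination hx.2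
      funext i
      fin_cases i
      · exact hx0.symm
      · rfl
      · rfl
      · rfl
      · exact hx4.symm
      · rfl
      · rfl
      · rfl
      · rfl
    · intro y _; rfl
    · intro x hx
      simp only [phiSols, mem_filter, mem_univ, true_and] at hx
      have hx0 : x 0 = x 1 + (x 3 - x 2) := by linear_combination hx.1
      have hx4 : x 4 = x 5 + (x 7 - x 8 - x 6) := by linear_combination hx.2
      rw [prod_nine]
      show h (x 0) * (h (x 1) * (h (x 2) * (h (x 3) * (h (x 4) *
          (h (x 5) * (h (x 6) * (h (x 7) * h (x 8))))))))
        = (h (x 1 + (x 3 - x 2)) * (h (x 1) * (h (x 2) * h (x 3)))) *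
          (h (x 5 + (x 7 - x 8 - x 6)) * (h (x 5) * (h (x 6) * (h (x 7) * h (x 8)))))
      rw [hx0, hx4]; ring
  have split : (∑ y : (G p n × G p n × G p n) × (G p n × G p n × G p n × G p n),
          (h (y.1.2.2 + (y.1.2.1 - y.1.1)) * (h y.1.2.2 * (h y.1.1 * h y.1.2.1))) *
          (h (y.2.2.2.2 + (y.2.2.2.1 - y.2.2.1 - y.2.1)) *
            (h y.2.2.2.2 * (h y.2.1 * (h y.2.2.2.1 * h y.2.2.1)))))
      = (∑ y1 : G p n × G p n × G p n,
          h (y1.2.2 + (y1.2.1 - y1.1)) * (h y1.2.2 * (h y1.1 * h y1.2.1))) *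
        (∑ y2 : G p n × G p n × G p n × G p n,
          h (y2.2.2.2 + (y2.2.2.1 - y2.2.1 - y2.1)) *
            (h y2.2.2.2 * (h y2.1 * (h y2.2.2.1 * h y2.2.1)))) := by
    rw [Finset.sum_mul_sum]
    exact Fintype.sum_prod_type _
  rw [key, split, sumA4, sumA5]

/-! #### Correlation representations -/

lemma rep4 (h : G p n → ℝ) : S4 p n h = ∑ t : G p n, Ff p n h t * Ff p n h t := by
  unfold S4
  have step1 : ∀ c d : G p n, ∑ b : G p n, h (b + (d - c)) * (h b * (h c * h d))
      = Ff p n h (d - c) * (h c * h d) := by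
    intro c d
    unfold Ff
    rw [Finset.sum_mul]
    exact Finset.sum_congr rfl fun b _ => by ring
  simp only [step1]
  have step2 : ∀ c : G p n, ∑ d : G p n, Ff p n h (d - c) * (h c * h d)
      = ∑ t : G p n, Ff p n h t * (h c * h (c + t)) := by
    intro c
    refine (Fintype.sum_equiv (Equiv.addLeft c) _ _ ?_).symm
    intro t
    show Ff p n h t * (h c * h (c + t)) = Ff p n h (c + t - c) * (h c * h (c + t))
    rw [add_sub_cancel_left]
  simp only [step2]
  rw [Finset.sum_comm]
  refine Finset.sum_congr rfl fun t _ => ?_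
  rw [← Finset.mul_sum]
  congr 1
  unfold Ff
  exact Finset.sum_congr rfl fun c _ => (mul_comm _ _).symm

lemma rep5 (h : G p n → ℝ) : S5 p n h = ∑ t : G p n, Ff p n h t * Kf p n h t := by
  unfold S5
  have step1 : ∀ c e d : G p n,
      ∑ b : G p n, h (b + (d - e - c)) * (h b * (h c * (h d * h e)))
        = Ff p n h (d - e - c) * (h c * (h d * h e)) := by
    intro c e d
    unfold Ff
    rw [Finset.sum_mul]
    exact Finset.sum_congr rfl fun b _ => by ring
  simp only [step1]
  have step2 : ∀ c e : G p n, ∑ d : G p n, Ff p n h (d - e - c) * (h c * (h d * h e))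
      = ∑ t : G p n, Ff p n h t * (h c * (h (c + e + t) * h e)) := by
    intro c e
    refine (Fintype.sum_equiv (Equiv.addLeft (c + e)) _ _ ?_).symm
    intro t
    show Ff p n h t * (h c * (h (c + e + t) * h e))
      = Ff p n h (c + e + t - e - c) * (h c * (h (c + e + t) * h e))
    rw [show c + e + t - e - c = t from by ring]
  simp only [step2]
  have step3 : ∀ c : G p n,
      ∑ e : G p n, ∑ t : G p n, Ff p n h t * (h c * (h (c + e + t) * h e))
        = ∑ t : G p n, ∑ e : G p n, Ff p n h t * (h c * (h (c + e + t) * h e)) :=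
    fun c => Finset.sum_comm
  simp only [step3]
  rw [Finset.sum_comm]
  refine Finset.sum_congr rfl fun t _ => ?_
  unfold Kf
  rw [Finset.mul_sum]
  exact Finset.sum_congr rfl fun c _ => (Finset.mul_sum _ _ _).symm

/-! #### Vanishing and expansion lemmas -/

lemma F0 (g : G p n → ℝ) (hg : ∑ x : G p n, g x = 0) : ∑ t : G p n, Ff p n g t = 0 := by
  unfold Ff
  rw [Finset.sum_comm]
  have : ∀ x : G p n, ∑ t : G p n, g (x + t) * g x = 0 := by
    intro x
    have hu : ∑ t : G p n, g (x + t) = 0 := by rw [shiftL g x, hg]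
    exact sum_mul_right _ hu _
  simp only [this, Finset.sum_const_zero]

lemma K0 (g : G p n → ℝ) (hg : ∑ x : G p n, g x = 0) : ∑ t : G p n, Kf p n g t = 0 := by
  unfold Kf
  rw [Finset.sum_comm]
  have inner : ∀ c e : G p n, ∑ t : G p n, g c * (g (c + e + t) * g e) = 0 := by
    intro c e
    have hu : ∑ t : G p n, g (c + e + t) = 0 := by rw [shiftL g (c + e), hg]
    have : ∀ t : G p n, g c * (g (c + e + t) * g e) = g (c + e + t) * (g c * g e) :=
      fun t => by ring
    simp only [this]
    exact sum_mul_right _ hu _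
  have : ∀ c : G p n, ∑ t : G p n, ∑ e : G p n, g c * (g (c + e + t) * g e) = 0 := by
    intro c
    rw [Finset.sum_comm]
    simp only [inner, Finset.sum_const_zero]
  simp only [this, Finset.sum_const_zero]

lemma Fexp (g : G p n → ℝ) (hg : ∑ x : G p n, g x = 0) (α : ℝ) (t : G p n) :
    Ff p n (fun x => α + g x) t = α ^ 2 * (p : ℝ) ^ n + Ff p n g t := by
  unfold Ff
  have expand : ∀ x : G p n, (α + g (x + t)) * (α + g x)
      = α * α + (α * g x + (g (x + t) * α + g (x + t) * g x)) := fun x => by ring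
  simp only [expand, Finset.sum_add_distrib]
  have h1 : ∑ _x : G p n, α * α = (p : ℝ) ^ n * (α * α) := sum_const_G _
  have h2 : ∑ x : G p n, α * g x = 0 := sum_mul_left g hg α
  have h3 : ∑ x : G p n, g (x + t) * α = 0 := by
    have hu : ∑ x : G p n, g (x + t) = 0 := by rw [shiftR g t, hg]
    exact sum_mul_right _ hu _
  rw [h1, h2, h3]
  ring

lemma Kexp (g : G p n → ℝ) (hg : ∑ x : G p n, g x = 0) (α : ℝ) (t : G p n) :
    Kf p n (fun x => α + g x) t = α ^ 3 * ((p : ℝ) ^ n) ^ 2 + Kf p n g t := by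
  unfold Kf
  have expand : ∀ c e : G p n, (α + g c) * ((α + g (c + e + t)) * (α + g e))
      = α * (α * α) + (g c * (α * α) + (g (c + e + t) * (α * α) + ((α * α) * g e +
        (g c * (g (c + e + t) * α) + ((g c * α) * g e +
        ((g (c + e + t) * g e) * α + g c * (g (c + e + t) * g e))))))) := fun c e => by ring
  simp only [expand, Finset.sum_add_distrib]
  have hshift : ∀ c : G p n, ∑ e : G p n, g (c + e + t) = 0 := by
    intro c
    have : ∀ e : G p n, c + e + t = e + (c + t) := fun e => by ring
    simp only [this]
    rw [shiftR g (c + t), hg]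
  -- term 1
  have h1 : ∑ c : G p n, ∑ _e : G p n, α * (α * α)
      = (p : ℝ) ^ n * ((p : ℝ) ^ n * (α * (α * α))) := by
    simp only [sum_const_G]
  -- term 2
  have h2 : ∑ c : G p n, ∑ _e : G p n, g c * (α * α) = 0 := by
    have : ∀ c : G p n, ∑ _e : G p n, g c * (α * α)
        = g c * ((p : ℝ) ^ n * (α * α)) := by
      intro c; rw [sum_const_G]; ring
    simp only [this]
    exact sum_mul_right g hg _
  -- term 3
  have h3 : ∑ c : G p n, ∑ e : G p n, g (c + e + t) * (α * α) = 0 := by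
    have : ∀ c : G p n, ∑ e : G p n, g (c + e + t) * (α * α) = 0 :=
      fun c => sum_mul_right _ (hshift c) _
    simp only [this, Finset.sum_const_zero]
  -- term 4
  have h4 : ∑ c : G p n, ∑ e : G p n, (α * α) * g e = 0 := by
    have : (∑ e : G p n, (α * α) * g e) = 0 := sum_mul_left g hg _
    simp only [this, Finset.sum_const_zero]
  -- term 5
  have h5 : ∑ c : G p n, ∑ e : G p n, g c * (g (c + e + t) * α) = 0 := by
    have : ∀ c : G p n, ∑ e : G p n, g c * (g (c + e + t) * α)
        = (∑ e : G p n, g (c + e + t)) * (g c * α) := by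
      intro c
      rw [Finset.sum_mul]
      exact Finset.sum_congr rfl fun e _ => by ring
    simp only [this]
    simp only [hshift, zero_mul, Finset.sum_const_zero]
  -- term 6
  have h6 : ∑ c : G p n, ∑ e : G p n, (g c * α) * g e = 0 := by
    have : ∀ c : G p n, ∑ e : G p n, (g c * α) * g e = 0 :=
      fun c => sum_mul_left g hg _
    simp only [this, Finset.sum_const_zero]
  -- term 7
  have h7 : ∑ c : G p n, ∑ e : G p n, (g (c + e + t) * g e) * α = 0 := by
    have inner : ∀ c : G p n, ∑ e : G p n, g (c + e + t) * g e = Ff p n g (c + t) := by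
      intro c
      unfold Ff
      refine Finset.sum_congr rfl fun e _ => ?_
      rw [show c + e + t = e + (c + t) from by ring]
    have : ∀ c : G p n, ∑ e : G p n, (g (c + e + t) * g e) * α
        = Ff p n g (c + t) * α := by
      intro c
      rw [← inner c, Finset.sum_mul]
    simp only [this]
    have hFF : ∑ c : G p n, Ff p n g (c + t) = 0 := by
      rw [shiftR (Ff p n g) t]
      exact F0 g hg
    exact sum_mul_right _ hFF _
  rw [h1, h2, h3, h4, h5, h6, h7]
  ring

lemma K4 (g : G p n → ℝ) (hg : ∑ x : G p n, g x = 0) (α : ℝ) :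
    S4 p n (fun x => α + g x) = α ^ 4 * ((p : ℝ) ^ n) ^ 3 + S4 p n g := by
  rw [rep4, rep4 g]
  simp only [Fexp g hg α]
  have expand : ∀ t : G p n,
      (α ^ 2 * (p : ℝ) ^ n + Ff p n g t) * (α ^ 2 * (p : ℝ) ^ n + Ff p n g t)
        = α ^ 4 * ((p : ℝ) ^ n) ^ 2 +
          (Ff p n g t * (α ^ 2 * (p : ℝ) ^ n * 2) + Ff p n g t * Ff p n g t) :=
    fun t => by ring
  simp only [expand, Finset.sum_add_distrib]
  rw [sum_const_G, sum_mul_right _ (F0 g hg) _]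
  ring

lemma K5 (g : G p n → ℝ) (hg : ∑ x : G p n, g x = 0) (α : ℝ) :
    S5 p n (fun x => α + g x) = α ^ 5 * ((p : ℝ) ^ n) ^ 4 + S5 p n g := by
  rw [rep5, rep5 g]
  simp only [Fexp g hg α, Kexp g hg α]
  have expand : ∀ t : G p n,
      (α ^ 2 * (p : ℝ) ^ n + Ff p n g t) * (α ^ 3 * ((p : ℝ) ^ n) ^ 2 + Kf p n g t)
        = α ^ 5 * ((p : ℝ) ^ n) ^ 3 +
          (Kf p n g t * (α ^ 2 * (p : ℝ) ^ n) +
            (Ff p n g t * (α ^ 3 * ((p : ℝ) ^ n) ^ 2) + Ff p n g t * Kf p n g t)) :=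
    fun t => by ring
  simp only [expand, Finset.sum_add_distrib]
  rw [sum_const_G, sum_mul_right _ (K0 g hg) _, sum_mul_right _ (F0 g hg) _]
  ring

lemma neg4 (g : G p n → ℝ) : S4 p n (fun x => -g x) = S4 p n g := by
  unfold S4
  refine Finset.sum_congr rfl fun c _ => Finset.sum_congr rfl fun d _ =>
    Finset.sum_congr rfl fun b _ => by ring

lemma neg5 (g : G p n → ℝ) : S5 p n (fun x => -g x) = -S5 p n g := by
  unfold S5
  have : ∀ c e d b : G p n,
      (-g (b + (d - e - c))) * (-g b * (-g c * (-g d * -g e)))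
        = -(g (b + (d - e - c)) * (g b * (g c * (g d * g e)))) := fun c e d b => by ring
  simp only [this, Finset.sum_neg_distrib]

lemma S4_one : S4 p n (fun _ => (1 : ℝ)) = ((p : ℝ) ^ n) ^ 3 := by
  unfold S4
  simp only [mul_one, sum_const_G]
  ring

lemma S5_one : S5 p n (fun _ => (1 : ℝ)) = ((p : ℝ) ^ n) ^ 4 := by
  unfold S5
  simp only [mul_one, sum_const_G]
  ring

lemma c4 : ((a4Sols p n).card : ℝ) = ((p : ℝ) ^ n) ^ 3 := by
  have h := P4 (p := p) (n := n) (fun _ => (1 : ℝ))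
  rw [S4_one] at h
  simpa using h

lemma c5 : ((a5Sols p n).card : ℝ) = ((p : ℝ) ^ n) ^ 4 := by
  have h := P5 (p := p) (n := n) (fun _ => (1 : ℝ))
  rw [S5_one] at h
  simpa using h

lemma c9 : ((phiSols p n).card : ℝ) = ((p : ℝ) ^ n) ^ 3 * ((p : ℝ) ^ n) ^ 4 := by
  have h := P9 (p := p) (n := n) (fun _ => (1 : ℝ))
  rw [S4_one, S5_one] at h
  simpa using h

lemma Tphi_eq (h : G p n → ℝ) :
    Tphi p n h = S4 p n h * S5 p n h / (((p : ℝ) ^ n) ^ 3 * ((p : ℝ) ^ n) ^ 4) := by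
  unfold Tphi
  rw [P9, c9]

lemma TA4_eq (h : G p n → ℝ) : TA4 p n h = S4 p n h / ((p : ℝ) ^ n) ^ 3 := by
  unfold TA4
  rw [P4, c4]

lemma TA5_eq (h : G p n → ℝ) : TA5 p n h = S5 p n h / ((p : ℝ) ^ n) ^ 4 := by
  unfold TA5
  rw [P5, c5]

end Aux

theorem phi_decomposition (p : ℕ) [NeZero p] (hp : p.Prime) (hodd : Odd p)
    (n : ℕ) (hn : 1 ≤ n) (f : G p n → ℝ) :
    Tphi p n f + Tphi p n (fun x => 1 - f x) =
      (expect p n f) ^ 9 + (1 - expect p n f) ^ 9 +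
        ((expect p n f) ^ 5 + (1 - expect p n f) ^ 5) *
          TA4 p n (fun x => f x - expect p n f) +
        ((expect p n f) ^ 4 - (1 - expect p n f) ^ 4) *
          TA5 p n (fun x => f x - expect p n f) := by
  have hT : ((p : ℝ) ^ n) ≠ 0 := pow_ne_zero _ (Nat.cast_ne_zero.mpr (NeZero.ne p))
  set α := expect p n f with hα
  set g : G p n → ℝ := fun x => f x - α with hgdef
  have hαv : α = (∑ x : G p n, f x) / (p : ℝ) ^ n := hα
  have hg : ∑ x : G p n, g x = 0 := by
    simp only [hgdef, Finset.sum_sub_distrib]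
    rw [sum_const_G, hαv]
    field_simp
    ring
  have hf : f = fun x => α + g x := by funext x; simp only [hgdef]; ring
  have h1f : (fun x => 1 - f x) = fun x => (1 - α) + -g x := by
    funext x; simp only [hgdef]; ring
  have hgneg : ∑ x : G p n, -g x = 0 := by
    rw [Finset.sum_neg_distrib, hg, neg_zero]
  have e1 : S4 p n f = α ^ 4 * ((p : ℝ) ^ n) ^ 3 + S4 p n g := by
    rw [hf]; exact K4 g hg α
  have e2 : S5 p n f = α ^ 5 * ((p : ℝ) ^ n) ^ 4 + S5 p n g := by
    rw [hf]; exact K5 g hg α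
  have e3 : S4 p n (fun x => 1 - f x) = (1 - α) ^ 4 * ((p : ℝ) ^ n) ^ 3 + S4 p n g := by
    rw [h1f]
    have := K4 (fun x => -g x) hgneg (1 - α)
    rw [neg4 g] at this
    exact this
  have e4 : S5 p n (fun x => 1 - f x) = (1 - α) ^ 5 * ((p : ℝ) ^ n) ^ 4 + -S5 p n g := by
    rw [h1f]
    have := K5 (fun x => -g x) hgneg (1 - α)
    rw [neg5 g] at this
    exact this
  simp only [Tphi_eq, TA4_eq, TA5_eq]
  rw [e1, e2, e3, e4]
  field_simp
  ring
end

section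
/- Let p be a prime and let M be an m × t matrix over 𝔽_p of rank m with m < t, such that for each coordinate i ∈ {1,…,t} the kernel of M in 𝔽_p^t is not contained in the hyperplane {v : v_i = 0}. If the system M is 1/2-prevalent and weakly Alon, then it is geometrically common. (Equivalently, the proved direction of Proposition 4.5: a 1/2-prevalent system that is not geometrically common is not weakly Alon.) -/
open Finset

/-- The set of solutions in `(𝔽_p^n)^t` of the linear system given by the matrix `M`. -/
def sols (p : ℕ) [NeZero p] {m t : ℕ} (M : Matrix (Fin m) (Fin t) (ZMod p)) (n : ℕ) :
    Finset (Fin t → G p n) :=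
  Finset.univ.filter fun x => ∀ j, ∑ i, M j i • x i = 0

/-- `T_M(f)`: the average of `∏ᵢ f(xᵢ)` over solutions of the system `M`. -/
noncomputable def TM (p : ℕ) [NeZero p] {m t : ℕ} (M : Matrix (Fin m) (Fin t) (ZMod p))
    (n : ℕ) (f : G p n → ℝ) : ℝ :=
  (∑ x ∈ sols p M n, ∏ i, f (x i)) / (sols p M n).card

/-- The system `M` is `1/2`-prevalent: there is `c > 0` such that every `[0,1]`-valued
function of mean `1/2` has solution density at least `c`. -/
def IsHalfPrevalent (p : ℕ) [NeZero p] {m t : ℕ} (M : Matrix (Fin m) (Fin t) (ZMod p)) :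
    Prop :=
  ∃ c > (0 : ℝ), ∀ n ≥ 1, ∀ f : G p n → ℝ, (∀ x, 0 ≤ f x ∧ f x ≤ 1) →
    expect p n f = 1 / 2 → TM p M n f ≥ c

/-- The system `M` is geometrically common: for every `[0,1]`-valued function of
mean `1/2`, the product `T_M(f)·T_M(1−f)` is at least `2^{−2t}`. -/
def IsGeometricallyCommon (p : ℕ) [NeZero p] {m t : ℕ}
    (M : Matrix (Fin m) (Fin t) (ZMod p)) : Prop :=
  ∀ n ≥ 1, ∀ f : G p n → ℝ, (∀ x, 0 ≤ f x ∧ f x ≤ 1) → expect p n f = 1 / 2 →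
    TM p M n f * TM p M n (fun x => 1 - f x) ≥ (2 : ℝ) ^ (-(2 * (t : ℤ)))

/-- The system `M` is weakly Alon: for every `ε > 0`, for all sufficiently large `l`,
the system obtained by adding `l` free variables is common up to a loss of `ε·2^{−l}`. -/
def IsWeaklyAlon (p : ℕ) [NeZero p] {m t : ℕ} (M : Matrix (Fin m) (Fin t) (ZMod p)) :
    Prop :=
  ∀ ε > (0 : ℝ), ∃ l₀ : ℕ, ∀ l ≥ l₀, ∀ n ≥ 1, ∀ f : G p n → ℝ,
    (∀ x, 0 ≤ f x ∧ f x ≤ 1) →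
    (expect p n f) ^ l * TM p M n f + (1 - expect p n f) ^ l * TM p M n (fun x => 1 - f x) >
      (2 : ℝ) ^ (-(l : ℤ)) * ((2 : ℝ) ^ (1 - (t : ℤ)) - ε)

section Aux

variable (p : ℕ) [NeZero p] {m t : ℕ} (M : Matrix (Fin m) (Fin t) (ZMod p)) (n : ℕ)

lemma sols_card_pos : 0 < (sols p M n).card := by
  refine Finset.card_pos.2 ⟨0, ?_⟩
  simp [sols]

lemma TM_nonneg (f : G p n → ℝ) (hf : ∀ x, 0 ≤ f x) : 0 ≤ TM p M n f :=
  div_nonneg (Finset.sum_nonneg fun x _ => Finset.prod_nonneg fun i _ => hf _)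
    (Nat.cast_nonneg _)

lemma TM_mono (f g : G p n → ℝ) (hf : ∀ x, 0 ≤ f x) (hfg : ∀ x, f x ≤ g x) :
    TM p M n f ≤ TM p M n g := by
  unfold TM
  have hc : (0:ℝ) < ((sols p M n).card : ℝ) := by exact_mod_cast sols_card_pos p M n
  refine (div_le_div_iff_of_pos_right hc).2 (Finset.sum_le_sum fun x _ => ?_)
  exact Finset.prod_le_prod (fun i _ => hf _) (fun i _ => hfg _)

lemma TM_smul (c : ℝ) (f : G p n → ℝ) :
    TM p M n (fun x => c * f x) = c ^ t * TM p M n f := by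
  unfold TM
  rw [← mul_div_assoc]
  congr 1
  rw [Finset.mul_sum]
  refine Finset.sum_congr rfl fun x _ => ?_
  simp [Finset.prod_mul_distrib]

lemma prod_add_le {ι : Type*} (s : Finset ι) (a : ι → ℝ) (ha : ∀ i, 0 ≤ a i ∧ a i ≤ 1)
    {δ : ℝ} (hδ : 0 ≤ δ) :
    ∏ i ∈ s, (a i + δ) ≤ ∏ i ∈ s, a i + ((1 + δ) ^ s.card - 1) := by
  classical
  induction s using Finset.induction_on with
  | empty => simp
  | @insert i s hi ih =>
    rw [Finset.prod_insert hi, Finset.prod_insert hi, Finset.card_insert_of_notMem hi]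
    have hP' : ∏ j ∈ s, (a j + δ) ≤ (1 + δ) ^ s.card := by
      calc ∏ j ∈ s, (a j + δ) ≤ ∏ _j ∈ s, (1 + δ) :=
            Finset.prod_le_prod (fun j _ => by linarith [(ha j).1])
              (fun j _ => by linarith [(ha j).2])
        _ = (1 + δ) ^ s.card := by rw [Finset.prod_const]
    have hP0 : 0 ≤ ∏ j ∈ s, a j := Finset.prod_nonneg fun j _ => (ha j).1
    have hP'0 : 0 ≤ ∏ j ∈ s, (a j + δ) := Finset.prod_nonneg fun j _ => by linarith [(ha j).1]
    have h1 : (1:ℝ) ≤ (1 + δ) ^ s.card := one_le_pow₀ (by linarith)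
    have hstep : (1 + δ) ^ (s.card + 1) = (1 + δ) ^ s.card * (1 + δ) := pow_succ _ _
    nlinarith [(ha i).1, (ha i).2, mul_le_mul_of_nonneg_left ih (ha i).1,
      mul_le_mul_of_nonneg_left hP' hδ]

lemma TM_add_const_le (f : G p n → ℝ) (hf : ∀ x, 0 ≤ f x ∧ f x ≤ 1) {δ : ℝ} (hδ : 0 ≤ δ) :
    TM p M n (fun x => f x + δ) ≤ TM p M n f + ((1 + δ) ^ t - 1) := by
  unfold TM
  have hc : (0:ℝ) < ((sols p M n).card : ℝ) := by exact_mod_cast sols_card_pos p M n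
  rw [div_add' _ _ _ hc.ne']
  refine (div_le_div_iff_of_pos_right hc).2 ?_
  have key : ∀ x ∈ sols p M n,
      (∏ i : Fin t, (f (x i) + δ)) ≤ (∏ i : Fin t, f (x i)) + ((1 + δ) ^ t - 1) := by
    intro x _
    have := prod_add_le (Finset.univ : Finset (Fin t)) (fun i => f (x i))
      (fun i => hf (x i)) hδ
    simpa using this
  calc ∑ x ∈ sols p M n, ∏ i : Fin t, (fun y => f y + δ) (x i)
      ≤ ∑ x ∈ sols p M n, ((∏ i : Fin t, f (x i)) + ((1 + δ) ^ t - 1)) :=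
        Finset.sum_le_sum key
    _ = (∑ x ∈ sols p M n, ∏ i : Fin t, f (x i)) + ((1 + δ) ^ t - 1) * (sols p M n).card := by
        rw [Finset.sum_add_distrib, Finset.sum_const, nsmul_eq_mul]; ring

lemma card_G : ((Fintype.card (G p n)) : ℝ) = (p:ℝ) ^ n := by
  simp [G, ZMod.card]

lemma expect_affine (f : G p n → ℝ) (c d : ℝ) :
    _root_.expect p n (fun x => c * f x + d) = c * _root_.expect p n f + d := by
  unfold _root_.expect
  have hp0 : ((p:ℝ)) ^ n ≠ 0 := by
    have : (p:ℝ) ≠ 0 := Nat.cast_ne_zero.2 (NeZero.ne p)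
    positivity
  rw [Finset.sum_add_distrib, ← Finset.mul_sum, Finset.sum_const, Finset.card_univ,
    nsmul_eq_mul, card_G]
  field_simp

lemma expect_one_sub (f : G p n → ℝ) :
    _root_.expect p n (fun x => 1 - f x) = 1 - _root_.expect p n f := by
  have h : (fun x : G p n => 1 - f x) = fun x => (-1) * f x + 1 := by funext x; ring
  rw [h, expect_affine]
  ring

end Aux


set_option maxHeartbeats 2000000 in
lemma key_lemma (p : ℕ) [NeZero p] {m t : ℕ} (M : Matrix (Fin m) (Fin t) (ZMod p))
    (hprev : IsHalfPrevalent p M) (halon : IsWeaklyAlon p M)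
    {n : ℕ} (hn : n ≥ 1) (f : G p n → ℝ) (hf : ∀ x, 0 ≤ f x ∧ f x ≤ 1)
    (hmean : _root_.expect p n f = 1 / 2)
    (hab : TM p M n f ≤ TM p M n (fun x => 1 - f x)) :
    TM p M n f * TM p M n (fun x => 1 - f x) ≥ (2 : ℝ) ^ (-(2 * (t : ℤ))) := by
  by_contra hcon
  push_neg at hcon
  obtain ⟨c, hc, hcp⟩ := hprev
  set a := TM p M n f with ha_def
  set b := TM p M n (fun x => 1 - f x) with hb_def
  have hmean' : _root_.expect p n (fun x => 1 - f x) = 1 / 2 := by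
    rw [expect_one_sub, hmean]; norm_num
  have hf' : ∀ x, 0 ≤ 1 - f x ∧ 1 - f x ≤ 1 := fun x =>
    ⟨by linarith only [(hf x).2], by linarith only [(hf x).1]⟩
  have ha : c ≤ a := hcp n hn f hf hmean
  have hb : c ≤ b := hcp n hn _ hf' hmean'
  have ha0 : 0 < a := lt_of_lt_of_le hc ha
  have hb0 : 0 < b := lt_of_lt_of_le hc hb
  set S := Real.sqrt (a * b) with hS_def
  have hS2 : S * S = a * b := Real.mul_self_sqrt (by positivity)
  have hS0 : 0 < S := Real.sqrt_pos.2 (by positivity)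
  set ρ := S / a with hρ_def
  have hρ0 : 0 < ρ := div_pos hS0 ha0
  have haS : a ≤ S := by nlinarith only [hS2, hab, ha0, hS0]
  have hρ1 : 1 ≤ ρ := (one_le_div ha0).2 haS
  have hρa : ρ * a = S := div_mul_cancel₀ S ha0.ne'
  have hρb : ρ⁻¹ * b = S := by
    rw [hρ_def, inv_div, div_mul_eq_mul_div, div_eq_iff hS0.ne']
    linarith only [hS2]
  have hzq : ((2 : ℝ) ^ (-(t : ℤ))) ^ 2 = (2 : ℝ) ^ (-(2 * (t : ℤ))) := by
    rw [← zpow_natCast ((2 : ℝ) ^ (-(t : ℤ))) 2, ← zpow_mul]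
    congr 1
    push_cast
    ring
  have h2t : (0 : ℝ) < (2 : ℝ) ^ (-(t : ℤ)) := by positivity
  have hSlt : S < (2 : ℝ) ^ (-(t : ℤ)) := by nlinarith only [hcon, hS2, hzq, hS0, h2t]
  have h1t : (2 : ℝ) ^ (1 - (t : ℤ)) = 2 * (2 : ℝ) ^ (-(t : ℤ)) := by
    rw [sub_eq_add_neg, zpow_add₀ (two_ne_zero), zpow_one]
  set ε := (2 : ℝ) ^ (1 - (t : ℤ)) / 2 - S with hε_def
  have hε : 0 < ε := by rw [hε_def, h1t]; linarith only [hSlt]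
  obtain ⟨l₀, hl₀⟩ := halon ε hε
  have htend : Filter.Tendsto (fun l : ℕ => ρ ^ ((l : ℝ)⁻¹)) Filter.atTop (nhds 1) := by
    have h1 := tendsto_inv_atTop_nhds_zero_nat (𝕜 := ℝ)
    have h2 : ContinuousAt (fun y : ℝ => ρ ^ y) 0 := Real.continuousAt_const_rpow hρ0.ne'
    have h3 := h2.tendsto.comp h1
    simpa [Real.rpow_zero, Function.comp_def] using h3
  have hq : Filter.Tendsto (fun l : ℕ => ρ * ((ρ ^ ((l : ℝ)⁻¹)) ^ t - 1))
      Filter.atTop (nhds 0) := by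
    have h4 := ((htend.pow t).sub (tendsto_const_nhds (x := (1 : ℝ)))).const_mul ρ
    simpa using h4
  have e1 := hq.eventually_lt_const hε
  have e2 := htend.eventually_lt_const (show (1 : ℝ) < 2 by norm_num)
  obtain ⟨l, ⟨⟨hql, hδ2⟩, hll₀⟩, hl1⟩ :=
    (((e1.and e2).and (Filter.eventually_ge_atTop l₀)).and (Filter.eventually_ge_atTop 1)).exists
  have hlR : (0 : ℝ) < (l : ℝ) := by exact_mod_cast hl1
  set δ := ρ ^ ((l : ℝ)⁻¹) - 1 with hδ_def
  have h1δ : 1 + δ = ρ ^ ((l : ℝ)⁻¹) := by rw [hδ_def]; ring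
  have hδ0 : 0 ≤ δ := by
    have := Real.one_le_rpow hρ1 (by positivity : (0 : ℝ) ≤ ((l : ℝ))⁻¹)
    rw [hδ_def]; linarith only [this]
  have hδ1 : δ ≤ 1 := by rw [hδ_def]; linarith only [hδ2]
  have hpowl : (1 + δ) ^ l = ρ := by
    rw [h1δ, ← Real.rpow_natCast (ρ ^ ((l : ℝ)⁻¹)) l, ← Real.rpow_mul hρ0.le,
      inv_mul_cancel₀ hlR.ne', Real.rpow_one]
  set g : G p n → ℝ := fun x => (1 - δ) * f x + δ with hg_def
  have hgbound : ∀ x, 0 ≤ g x ∧ g x ≤ 1 := by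
    intro x
    have h1 := (hf x).1; have h2 := (hf x).2
    constructor
    · show 0 ≤ (1 - δ) * f x + δ; nlinarith only [h1, h2, hδ0, hδ1]
    · show (1 - δ) * f x + δ ≤ 1; nlinarith only [h1, h2, hδ0, hδ1]
  have hgmean : _root_.expect p n g = (1 + δ) / 2 := by
    rw [hg_def, expect_affine, hmean]; ring
  have H := hl₀ l hll₀ n hn g hgbound
  rw [hgmean] at H
  set E := (1 + δ) ^ t - 1 with hE_def
  have hE0 : 0 ≤ E := by
    have h5 : (1 : ℝ) ≤ (1 + δ) ^ t := one_le_pow₀ (by linarith)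
    rw [hE_def]; linarith only [h5]
  have hρE : ρ * E < ε := by rw [hE_def, h1δ]; exact hql
  have hTMg : TM p M n g ≤ a + E := by
    have step1 : TM p M n g ≤ TM p M n (fun x => f x + δ) := by
      refine TM_mono p M n g (fun x => f x + δ) (fun x => (hgbound x).1) (fun x => ?_)
      show (1 - δ) * f x + δ ≤ f x + δ
      have h14 := (hf x).1; nlinarith only [h14, hδ0, hδ1]
    have step2 := TM_add_const_le p M n f hf hδ0
    rw [ha_def, hE_def]; linarith only [step1, step2]
  have hTM1g : TM p M n (fun x => 1 - g x) = (1 - δ) ^ t * b := by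
    have h6 : (fun x : G p n => 1 - g x) = fun x => (1 - δ) * (1 - f x) := by
      funext x; show 1 - ((1 - δ) * f x + δ) = (1 - δ) * (1 - f x); ring
    rw [h6, TM_smul, hb_def]
  have hC : (1 - δ) ^ l ≤ ρ⁻¹ := by
    have hprod : (1 - δ) ^ l * ρ ≤ 1 := by
      rw [← hpowl, ← mul_pow]
      have h7 : (1 - δ) * (1 + δ) ≤ 1 := by nlinarith only [hδ0, hδ1]
      have h8 : 0 ≤ (1 - δ) * (1 + δ) := by nlinarith only [hδ0, hδ1]
      calc ((1 - δ) * (1 + δ)) ^ l ≤ 1 ^ l := pow_le_pow_left₀ h8 h7 l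
        _ = 1 := one_pow l
    have h9 := (le_div_iff₀ hρ0).2 hprod
    simpa [one_div] using h9
  have h2l : (0 : ℝ) < (2 : ℝ) ^ l := by positivity
  have hB : ((1 : ℝ) - (1 + δ) / 2) = (1 - δ) / 2 := by ring
  rw [hB] at H
  have hterm1 : ((1 + δ) / 2) ^ l * TM p M n g ≤ ρ * (a + E) / 2 ^ l := by
    rw [div_pow, hpowl, div_mul_eq_mul_div]
    refine (div_le_div_iff_of_pos_right h2l).2 ?_
    exact mul_le_mul_of_nonneg_left hTMg hρ0.le
  have hQ0 : 0 ≤ TM p M n (fun x => 1 - g x) :=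
    TM_nonneg p M n _ (fun x => by linarith [(hgbound x).2])
  have hQb : TM p M n (fun x => 1 - g x) ≤ b := by
    rw [hTM1g]
    have h10 : (1 - δ) ^ t ≤ 1 := pow_le_one₀ (by linarith only [hδ1]) (by linarith only [hδ0])
    calc (1 - δ) ^ t * b ≤ 1 * b := mul_le_mul_of_nonneg_right h10 hb0.le
      _ = b := one_mul b
  have hterm2 : ((1 - δ) / 2) ^ l * TM p M n (fun x => 1 - g x) ≤ ρ⁻¹ * b / 2 ^ l := by
    rw [div_pow]
    have h11 : ((1 - δ) ^ l / 2 ^ l) ≤ ρ⁻¹ / 2 ^ l := (div_le_div_iff_of_pos_right h2l).2 hC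
    have h12 : 0 ≤ ρ⁻¹ / 2 ^ l := div_nonneg (inv_nonneg.2 hρ0.le) h2l.le
    calc ((1 - δ) ^ l / 2 ^ l) * TM p M n (fun x => 1 - g x)
        ≤ (ρ⁻¹ / 2 ^ l) * b := mul_le_mul h11 hQb hQ0 h12
      _ = ρ⁻¹ * b / 2 ^ l := by ring
  have hRHSeq : (2 : ℝ) ^ (-(l : ℤ)) * ((2 : ℝ) ^ (1 - (t : ℤ)) - ε) = (2 * S + ε) / 2 ^ l := by
    rw [zpow_neg, zpow_natCast]
    have h13 : (2 : ℝ) ^ (1 - (t : ℤ)) - ε = 2 * S + ε := by rw [hε_def]; ring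
    rw [h13, inv_mul_eq_div]
  have hsum : ρ * (a + E) / 2 ^ l + ρ⁻¹ * b / 2 ^ l = (2 * S + ρ * E) / 2 ^ l := by
    rw [← add_div, mul_add, hρa, hρb]; ring
  have hlt : (2 * S + ρ * E) / 2 ^ l < (2 * S + ε) / 2 ^ l :=
    (div_lt_div_iff_of_pos_right h2l).2 (by linarith only [hρE])
  rw [hRHSeq] at H
  linarith only [hterm1, hterm2, hsum, hlt, H]

theorem weaklyAlon_imp_geometricallyCommon (p : ℕ) [NeZero p] (hp : p.Prime)
    {m t : ℕ} (hmt : m < t) (M : Matrix (Fin m) (Fin t) (ZMod p)) (hrank : M.rank = m)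
    (hker : ∀ i : Fin t, ∃ v : Fin t → ZMod p, M.mulVec v = 0 ∧ v i ≠ 0)
    (hprev : IsHalfPrevalent p M) (halon : IsWeaklyAlon p M) :
    IsGeometricallyCommon p M := by
  intro n hn f hf hmean
  rcases le_total (TM p M n f) (TM p M n (fun x => 1 - f x)) with h | h
  · exact key_lemma p M hprev halon hn f hf hmean h
  · have hf' : ∀ x, 0 ≤ 1 - f x ∧ 1 - f x ≤ 1 := fun x =>
      ⟨by linarith only [(hf x).2], by linarith only [(hf x).1]⟩
    have hmean' : expect p n (fun x => 1 - f x) = 1 / 2 := by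
      rw [expect_one_sub, hmean]; norm_num
    have hsym : (fun x : G p n => 1 - (1 - f x)) = f := by funext x; ring
    have h' : TM p M n (fun x => 1 - f x) ≤ TM p M n (fun x => 1 - (1 - f x)) := by
      rw [hsym]; exact h
    have hkey := key_lemma p M hprev halon hn (fun x => 1 - f x) hf' hmean' h'
    rw [hsym] at hkey
    rw [ge_iff_le, mul_comm (TM p M n f) (TM p M n (fun x => 1 - f x))]
    exact hkey
end
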